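/- arXiv:1110.6759 — 6 statements merged into one kernel-verified Lean document; each statement's English description precedes it below -/
import Mathlib

section
/- The infinite series ∑_{k=0}^∞ k!/(2k+1)!! converges to π/2, where (2k+1)!! denotes the double factorial 1·3·5···(2k+1). -/
open Filter Finset Real intervalIntegral

lemma myprod (k : ℕ) : ∏ i ∈ range k, (2*(i:ℝ)+2)/(2*i+3)
    = 2^k * (Nat.factorial k : ℝ) / (Nat.doubleFactorial (2*k+1) : ℝ) := by
  induction k with
  | zero => simp
  | succ k ih =>
    have hdf : (Nat.doubleFactorial (2*(k+1)+1) : ℝ)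
        = (2*(k:ℝ)+3) * (Nat.doubleFactorial (2*k+1) : ℝ) := by
      have h : 2*(k+1)+1 = (2*k+1)+2 := by ring
      rw [h, Nat.doubleFactorial_add_two]
      push_cast; ring
    have h0 : (Nat.doubleFactorial (2*k+1) : ℝ) ≠ 0 := by
      exact_mod_cast (Nat.doubleFactorial_pos _).ne'
    have h1 : (2*(k:ℝ)+3) ≠ 0 := by positivity
    rw [prod_range_succ, ih, hdf, Nat.factorial_succ]
    push_cast
    field_simp
    ring

lemma term_eq (k : ℕ) : (Nat.factorial k : ℝ) / (Nat.doubleFactorial (2*k+1) : ℝ)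
    = (1/2)^(k+1) * ∫ x in (0)..π, sin x ^ (2*k+1) := by
  rw [integral_sin_pow_odd, myprod]
  have h0 : (Nat.doubleFactorial (2*k+1) : ℝ) ≠ 0 := by
    exact_mod_cast (Nat.doubleFactorial_pos _).ne'
  field_simp
  ring_nf
  rw [← mul_pow]; norm_num

theorem stmt0 :
    Tendsto (fun N => ∑ k ∈ range N,
      (Nat.factorial k : ℝ) / (Nat.doubleFactorial (2 * k + 1) : ℝ))
      atTop (nhds (Real.pi / 2)) := by
  set g : ℝ → ℝ := fun x => sin x / (1 + cos x ^ 2) with hg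
  have hden : ∀ x : ℝ, (0:ℝ) < 1 + cos x ^ 2 := fun x => by positivity
  have hgcont : Continuous g := by
    apply Real.continuous_sin.div (by continuity)
    intro x; exact (hden x).ne'
  -- pointwise geometric sum
  have hpt : ∀ N : ℕ, ∀ x : ℝ, ∑ k ∈ range N, (1/2:ℝ)^(k+1) * sin x ^ (2*k+1)
      = g x - g x * (sin x ^ 2 / 2)^N := by
    intro N x
    have hs : sin x ^ 2 ≤ 1 := sin_sq_le_one x
    have hr1 : sin x ^ 2 / 2 ≠ 1 := by nlinarith
    have : ∑ k ∈ range N, (1/2:ℝ)^(k+1) * sin x ^ (2*k+1)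
        = (sin x / 2) * ∑ k ∈ range N, (sin x ^ 2 / 2)^k := by
      rw [Finset.mul_sum]
      apply Finset.sum_congr rfl
      intro k _
      rw [pow_add (Real.sin x) (2*k) 1, pow_mul]
      ring
    rw [this]
    have hc : 1 + cos x ^ 2 = 2 - sin x ^ 2 := by
      have := sin_sq_add_cos_sq x; linarith
    have hne : (1:ℝ) + cos x ^ 2 ≠ 0 := (hden x).ne'
    have hne2 : sin x ^ 2 / 2 - 1 ≠ 0 := sub_ne_zero.mpr hr1
    have hne3 : (2:ℝ) - sin x ^ 2 ≠ 0 := by nlinarith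
    rw [hg]
    simp only
    rw [hc]
    have hne2' : sin x ^ 2 / 2 - 1 ≠ 0 := sub_ne_zero.mpr hr1
    apply mul_left_cancel₀ hne2'
    rw [show (sin x ^ 2 / 2 - 1) * (sin x / 2 * ∑ k ∈ range N, (sin x ^ 2 / 2)^k)
        = (sin x / 2) * ((∑ k ∈ range N, (sin x ^ 2 / 2)^k) * (sin x ^ 2 / 2 - 1)) from by ring,
      geom_sum_mul]
    field_simp
    ring
  -- integral of g
  have hF : ∀ x : ℝ, HasDerivAt (fun y => -arctan (cos y)) (g x) x := by
    intro x
    have h1 : HasDerivAt (fun y => arctan (cos y))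
        (1 / (1 + cos x ^ 2) * (-sin x)) x :=
      (Real.hasDerivAt_arctan (cos x)).comp x (Real.hasDerivAt_cos x)
    have : HasDerivAt (fun y => -arctan (cos y)) (-(1 / (1 + cos x ^ 2) * -sin x)) x := h1.fun_neg
    convert this using 1
    rw [hg]; field_simp
  have hgint : IntervalIntegrable g MeasureTheory.volume 0 π :=
    hgcont.intervalIntegrable 0 π
  have hIg : ∫ x in (0)..π, g x = π/2 := by
    rw [integral_eq_sub_of_hasDerivAt (fun x _ => hF x) hgint]
    simp [Real.arctan_one, Real.arctan_neg]
    ring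
  -- rewrite partial sums
  have hS : ∀ N : ℕ, ∑ k ∈ range N,
      (Nat.factorial k : ℝ) / (Nat.doubleFactorial (2 * k + 1) : ℝ)
      = π/2 - ∫ x in (0)..π, g x * (sin x ^ 2 / 2)^N := by
    intro N
    have h1 : ∀ k : ℕ, (Nat.factorial k : ℝ) / (Nat.doubleFactorial (2*k+1) : ℝ)
        = ∫ x in (0)..π, (1/2:ℝ)^(k+1) * sin x ^ (2*k+1) := by
      intro k
      rw [intervalIntegral.integral_const_mul, ← term_eq]
    calc ∑ k ∈ range N, (Nat.factorial k : ℝ) / (Nat.doubleFactorial (2*k+1) : ℝ)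
        = ∑ k ∈ range N, ∫ x in (0)..π, (1/2:ℝ)^(k+1) * sin x ^ (2*k+1) := by
          exact Finset.sum_congr rfl fun k _ => h1 k
      _ = ∫ x in (0)..π, ∑ k ∈ range N, (1/2:ℝ)^(k+1) * sin x ^ (2*k+1) := by
          rw [intervalIntegral.integral_finset_sum]
          intro k _
          exact (Continuous.intervalIntegrable (by continuity) 0 π)
      _ = ∫ x in (0)..π, (g x - g x * (sin x ^ 2 / 2)^N) := by
          apply intervalIntegral.integral_congr
          intro x _; exact hpt N x
      _ = (∫ x in (0)..π, g x) - ∫ x in (0)..π, g x * (sin x ^ 2 / 2)^N := by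
          apply intervalIntegral.integral_sub hgint
          exact Continuous.intervalIntegrable (by continuity) 0 π
      _ = π/2 - ∫ x in (0)..π, g x * (sin x ^ 2 / 2)^N := by rw [hIg]
  simp only [hS]
  have hbound : ∀ N : ℕ, ‖∫ x in (0)..π, g x * (sin x ^ 2 / 2)^N‖ ≤ π * (1/2:ℝ)^N := by
    intro N
    have := intervalIntegral.norm_integral_le_of_norm_le_const
      (a := 0) (b := π) (C := (1/2:ℝ)^N)
      (f := fun x => g x * (sin x ^ 2 / 2)^N) ?_
    · calc ‖∫ x in (0)..π, g x * (sin x ^ 2 / 2)^N‖ ≤ (1/2:ℝ)^N * |π - 0| := this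
        _ = π * (1/2:ℝ)^N := by rw [sub_zero, abs_of_pos Real.pi_pos]; ring
    · intro x _
      have hgle : |g x| ≤ 1 := by
        rw [hg, abs_div]
        have h1 : |sin x| ≤ 1 := abs_sin_le_one x
        have h2 : (1:ℝ) ≤ |1 + cos x ^ 2| := by
          rw [abs_of_pos (hden x)]; nlinarith [sq_nonneg (cos x)]
        exact div_le_one_of_le₀ (h1.trans h2) (abs_nonneg _)
      have hrle : |(sin x ^ 2 / 2)^N| ≤ (1/2:ℝ)^N := by
        rw [abs_pow]
        apply pow_le_pow_left₀ (abs_nonneg _)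
        rw [abs_of_nonneg (by positivity)]
        nlinarith [sin_sq_le_one x]
      calc ‖g x * (sin x ^ 2 / 2)^N‖ = |g x| * |(sin x ^ 2 / 2)^N| := abs_mul _ _
        _ ≤ 1 * (1/2:ℝ)^N := mul_le_mul hgle hrle (abs_nonneg _) one_pos.le
        _ = (1/2:ℝ)^N := one_mul _
  have htend : Tendsto (fun N => ∫ x in (0)..π, g x * (sin x ^ 2 / 2)^N) atTop (nhds 0) := by
    apply squeeze_zero_norm hbound
    have : Tendsto (fun N : ℕ => (1/2:ℝ)^N) atTop (nhds 0) :=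
      tendsto_pow_atTop_nhds_zero_of_lt_one (by norm_num) (by norm_num)
    simpa using this.const_mul π
  have := (tendsto_const_nhds (x := π/2) (f := atTop (α := ℕ))).sub htend
  simpa using this
end

section
/- The infinite series ∑_{k=0}^∞ (k!)²/(2k+1)! converges to 2π/(3√3). -/
open Filter Finset Real

lemma quad_pos (x : ℝ) : 0 < 1 - x + x ^ 2 := by nlinarith [sq_nonneg (x - 1/2)]

lemma cont_denom : Continuous fun x : ℝ => 1 - x + x ^ 2 := by continuity

lemma prod_eq_asc (n m : ℕ) : ∏ j ∈ range m, (n + 1 + j) = (n + 1).ascFactorial m := by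
  induction m with
  | zero => simp
  | succ m ih => rw [prod_range_succ, ih, Nat.ascFactorial_succ]; ring

lemma beta_eval (k : ℕ) : (∫ x in (0:ℝ)..1, x ^ k * (1 - x) ^ k)
    = ((Nat.factorial k : ℝ)) ^ 2 / (Nat.factorial (2 * k + 1) : ℝ) := by
  have hu : 0 < Complex.re ((k : ℂ) + 1) := by
    simp only [Complex.add_re, Complex.natCast_re, Complex.one_re]
    positivity
  have h := Complex.betaIntegral_eval_nat_add_one_right hu k
  have hLHS : Complex.betaIntegral ((k : ℂ) + 1) ((k : ℂ) + 1)
      = ((∫ x in (0:ℝ)..1, x ^ k * (1 - x) ^ k : ℝ) : ℂ) := by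
    rw [Complex.betaIntegral, ← intervalIntegral.integral_ofReal]
    refine intervalIntegral.integral_congr fun x _ => ?_
    rw [add_sub_cancel_right, Complex.cpow_natCast, Complex.cpow_natCast]
    push_cast
    ring
  have hfac : (Nat.factorial k) * (k + 1).ascFactorial (k + 1)
      = Nat.factorial (2 * k + 1) := by
    rw [Nat.factorial_mul_ascFactorial]
    congr 1
    ring
  have hprod : (∏ j ∈ range (k + 1), ((k : ℂ) + 1 + (j : ℕ)))
      = ((k + 1).ascFactorial (k + 1) : ℂ) := by
    rw [← prod_eq_asc]
    push_cast
    rfl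
  rw [hLHS, hprod] at h
  have hasc0 : (k + 1).ascFactorial (k + 1) ≠ 0 := by
    intro hz
    rw [hz, mul_zero] at hfac
    exact (Nat.factorial_ne_zero _) hfac.symm
  have hreal : (∫ x in (0:ℝ)..1, x ^ k * (1 - x) ^ k)
      = (Nat.factorial k : ℝ) / ((k + 1).ascFactorial (k + 1) : ℝ) := by
    have : ((∫ x in (0:ℝ)..1, x ^ k * (1 - x) ^ k : ℝ) : ℂ)
        = (((Nat.factorial k : ℝ) / ((k + 1).ascFactorial (k + 1) : ℝ) : ℝ) : ℂ) := by
      rw [h]; push_cast; ring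
    exact_mod_cast this
  rw [hreal, ← hfac]
  have h1 : ((k).factorial : ℝ) ≠ 0 := by positivity
  have h2 : (((k + 1).ascFactorial (k + 1) : ℕ) : ℝ) ≠ 0 := Nat.cast_ne_zero.mpr hasc0
  push_cast
  field_simp

lemma arctan_sqrt3 : arctan (1 / Real.sqrt 3) = π / 6 := by
  rw [← Real.tan_pi_div_six, Real.arctan_tan] <;> nlinarith [Real.pi_pos]

lemma main_integral : (∫ x in (0:ℝ)..1, 1 / (1 - x + x ^ 2))
    = 2 * π / (3 * Real.sqrt 3) := by
  have hs3 : (0:ℝ) < Real.sqrt 3 := Real.sqrt_pos.mpr (by norm_num)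
  have hsq : Real.sqrt 3 ^ 2 = 3 := Real.sq_sqrt (by norm_num)
  have hderiv : ∀ x : ℝ, HasDerivAt (fun y => 2 / Real.sqrt 3 * arctan ((2 * y - 1) / Real.sqrt 3))
      (1 / (1 - x + x ^ 2)) x := by
    intro x
    have hin : HasDerivAt (fun y : ℝ => (2 * y - 1) / Real.sqrt 3) (2 / Real.sqrt 3) x := by
      have := (((hasDerivAt_id x).const_mul (2:ℝ)).sub_const 1).div_const (Real.sqrt 3)
      simpa [mul_one] using this
    have h1 := (Real.hasDerivAt_arctan ((2 * x - 1) / Real.sqrt 3)).comp x hin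
    have h2 := h1.const_mul (2 / Real.sqrt 3)
    refine h2.congr_deriv ?_
    symm
    rw [div_pow, hsq]
    rw [show (1:ℝ) + (2 * x - 1) ^ 2 / 3 = 4 * (1 - x + x ^ 2) / 3 by ring]
    have h3 : (1 - x + x ^ 2) ≠ 0 := (quad_pos x).ne'
    field_simp
    ring_nf
    rw [hsq]
    ring
  have hcont : Continuous fun x : ℝ => 1 / (1 - x + x ^ 2) :=
    continuous_const.div cont_denom fun x => (quad_pos x).ne'
  rw [intervalIntegral.integral_eq_sub_of_hasDerivAt (fun x _ => hderiv x)
    (hcont.intervalIntegrable 0 1)]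
  have h0 : (2 * (0:ℝ) - 1) / Real.sqrt 3 = -(1 / Real.sqrt 3) := by ring
  have h1 : (2 * (1:ℝ) - 1) / Real.sqrt 3 = 1 / Real.sqrt 3 := by ring
  rw [h0, h1, Real.arctan_neg, arctan_sqrt3]
  field_simp
  ring

theorem stmt1 :
    Tendsto (fun N => ∑ k ∈ range N,
      ((Nat.factorial k : ℝ))^2 / (Nat.factorial (2 * k + 1) : ℝ))
      atTop (nhds (2 * Real.pi / (3 * Real.sqrt 3))) := by
  have hcont : Continuous fun x : ℝ => 1 / (1 - x + x ^ 2) :=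
    continuous_const.div cont_denom fun x => (quad_pos x).ne'
  have hcontN : ∀ N : ℕ, Continuous fun x : ℝ => (x - x ^ 2) ^ N / (1 - x + x ^ 2) :=
    fun N => (by continuity : Continuous fun x : ℝ => (x - x ^ 2) ^ N).div cont_denom
      fun x => (quad_pos x).ne'
  have key : ∀ N : ℕ, (∑ k ∈ range N,
      ((Nat.factorial k : ℝ))^2 / (Nat.factorial (2 * k + 1) : ℝ))
      = 2 * π / (3 * Real.sqrt 3)
        - ∫ x in (0:ℝ)..1, (x - x ^ 2) ^ N / (1 - x + x ^ 2) := by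
    intro N
    have h1 : (∑ k ∈ range N,
        ((Nat.factorial k : ℝ))^2 / (Nat.factorial (2 * k + 1) : ℝ))
        = ∫ x in (0:ℝ)..1, ∑ k ∈ range N, (x - x ^ 2) ^ k := by
      rw [intervalIntegral.integral_finset_sum (fun k _ =>
        ((by continuity : Continuous fun x : ℝ => (x - x ^ 2) ^ k).intervalIntegrable 0 1))]
      refine Finset.sum_congr rfl fun k _ => ?_
      rw [← beta_eval k]
      refine intervalIntegral.integral_congr fun x _ => ?_
      rw [← mul_pow]
      ring_nf
    have h2 : (∫ x in (0:ℝ)..1, ∑ k ∈ range N, (x - x ^ 2) ^ k)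
        = ∫ x in (0:ℝ)..1,
          (1 / (1 - x + x ^ 2) - (x - x ^ 2) ^ N / (1 - x + x ^ 2)) := by
      refine intervalIntegral.integral_congr fun x _ => ?_
      have hne : (x - x ^ 2) ≠ 1 := by nlinarith [quad_pos x]
      rw [geom_sum_eq hne]
      have h3 : 1 - x + x ^ 2 ≠ 0 := (quad_pos x).ne'
      have h4 : x - x ^ 2 - 1 ≠ 0 := by nlinarith [quad_pos x]
      rw [div_sub_div_same, div_eq_div_iff h4 h3]
      ring
    rw [h1, h2, intervalIntegral.integral_sub (hcont.intervalIntegrable 0 1)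
      ((hcontN N).intervalIntegrable 0 1), main_integral]
  have herr : Tendsto (fun N : ℕ =>
      ∫ x in (0:ℝ)..1, (x - x ^ 2) ^ N / (1 - x + x ^ 2)) atTop (nhds 0) := by
    apply squeeze_zero_norm (a := fun N : ℕ => (1/4 : ℝ) ^ N * (4/3) * 1)
    · intro N
      have hb : ∀ x ∈ Set.uIoc (0:ℝ) 1,
          ‖(x - x ^ 2) ^ N / (1 - x + x ^ 2)‖ ≤ (1/4 : ℝ) ^ N * (4/3) := by
        intro x hx
        rw [Set.uIoc_of_le (by norm_num : (0:ℝ) ≤ 1)] at hx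
        obtain ⟨hx0, hx1⟩ := hx
        have hval : 0 ≤ x - x ^ 2 := by nlinarith
        have hval2 : x - x ^ 2 ≤ 1/4 := by nlinarith [sq_nonneg (x - 1/2)]
        have hden : 3/4 ≤ 1 - x + x ^ 2 := by nlinarith [sq_nonneg (x - 1/2)]
        rw [Real.norm_eq_abs, abs_div, abs_of_nonneg (pow_nonneg hval N),
          abs_of_pos (quad_pos x)]
        have hnum : (x - x ^ 2) ^ N ≤ (1/4 : ℝ) ^ N := pow_le_pow_left₀ hval hval2 N
        calc (x - x ^ 2) ^ N / (1 - x + x ^ 2) ≤ (1/4 : ℝ) ^ N / (3/4) := by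
              apply div_le_div₀ (by positivity) hnum (by norm_num) hden
          _ = (1/4 : ℝ) ^ N * (4/3) := by ring
      simpa using intervalIntegral.norm_integral_le_of_norm_le_const hb
    · have : Tendsto (fun N : ℕ => (1/4 : ℝ) ^ N) atTop (nhds 0) :=
        tendsto_pow_atTop_nhds_zero_of_lt_one (by norm_num) (by norm_num)
      simpa using (this.mul_const (4/3 : ℝ)).mul_const 1
  have hfin : Tendsto (fun N : ℕ => 2 * π / (3 * Real.sqrt 3)
      - ∫ x in (0:ℝ)..1, (x - x ^ 2) ^ N / (1 - x + x ^ 2)) atTop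
      (nhds (2 * π / (3 * Real.sqrt 3) - 0)) := tendsto_const_nhds.sub herr
  rw [sub_zero] at hfin
  exact hfin.congr fun N => (key N).symm
end

section
/- The infinite series ∑_{k=2}^∞ (k+2)!/(2k+1)!! converges to 3π/2. -/
open Filter Finset Real

lemma prod_df (k : ℕ) : ∏ i ∈ range k, (2*(i:ℝ)+2)/(2*i+3)
    = (2^k * k.factorial : ℝ) / ((2*k+1).doubleFactorial : ℝ) := by
  induction k with
  | zero => simp
  | succ n ih =>
    rw [prod_range_succ, ih]
    have h1 : (2*(n+1)+1) = (2*n+1) + 2 := by ring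
    rw [h1, Nat.doubleFactorial_add_two, Nat.factorial_succ]
    have hp : ((2*n+1).doubleFactorial : ℝ) ≠ 0 := by
      exact_mod_cast (Nat.doubleFactorial_pos _).ne'
    push_cast
    field_simp
    ring

lemma termA (k : ℕ) : (Nat.factorial (k+2) : ℝ)/((2*k+1).doubleFactorial : ℝ)
    = (((k:ℝ)+1)*((k:ℝ)+2)/2) * ∫ θ in (0:ℝ)..π, sin θ * (sin θ^2/2)^k := by
  have h1 : ∀ θ : ℝ, sin θ * (sin θ^2/2)^k = (sin θ ^ (2*k+1)) / 2^k := by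
    intro θ; rw [div_pow, ← pow_mul]; ring
  have h2 : (∫ θ in (0:ℝ)..π, sin θ * (sin θ^2/2)^k)
      = (∫ θ in (0:ℝ)..π, sin θ ^ (2*k+1)) / 2^k := by
    rw [← intervalIntegral.integral_div]
    exact intervalIntegral.integral_congr (fun θ _ => h1 θ)
  rw [h2, integral_sin_pow_odd, prod_df]
  have hp : ((2*k+1).doubleFactorial : ℝ) ≠ 0 := by
    exact_mod_cast (Nat.doubleFactorial_pos _).ne'
  have hf : (Nat.factorial (k+2) : ℝ) = ((k:ℝ)+2)*((k:ℝ)+1)*(Nat.factorial k) := by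
    rw [Nat.factorial_succ, Nat.factorial_succ]; push_cast; ring
  rw [hf]
  have h2k : (2:ℝ)^k ≠ 0 := by positivity
  field_simp

noncomputable def gg (θ : ℝ) : ℝ :=
  (1/2) * (sin θ * (2/(1 - sin θ^2/2)^3 - 2 - 6*(sin θ^2/2)))

noncomputable def GG (θ : ℝ) : ℝ :=
  -3 * arctan (cos θ) - 3*cos θ/(1+cos θ^2) - 2*cos θ/(1+cos θ^2)^2
    + (5/2)*cos θ - (cos θ)^3/2

lemma hasDerivAt_GG (θ : ℝ) : HasDerivAt GG (gg θ) θ := by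
  have hu : HasDerivAt cos (-sin θ) θ := Real.hasDerivAt_cos θ
  have hden : (1 + cos θ^2) ≠ 0 := by positivity
  have hd : HasDerivAt (fun t : ℝ => 1 + cos t^2) (2*cos θ*(-sin θ)) θ := by
    have := (hu.pow 2).const_add (1:ℝ)
    simpa [mul_comm, mul_assoc, mul_left_comm] using this
  have h1 : HasDerivAt (fun t : ℝ => arctan (cos t)) ((1/(1+cos θ^2)) * (-sin θ)) θ :=
    (Real.hasDerivAt_arctan (cos θ)).comp θ hu
  have h2 : HasDerivAt (fun t : ℝ => cos t/(1+cos t^2))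
      (((-sin θ)*(1+cos θ^2) - cos θ*(2*cos θ*(-sin θ)))/(1+cos θ^2)^2) θ :=
    hu.div hd hden
  have hd2 : HasDerivAt (fun t : ℝ => (1+cos t^2)^2) (2*(1+cos θ^2)*(2*cos θ*(-sin θ))) θ := by
    have := hd.fun_pow 2
    simpa [mul_comm, mul_assoc, mul_left_comm] using this
  have hden2 : ((1 + cos θ^2)^2) ≠ 0 := by positivity
  have h3 : HasDerivAt (fun t : ℝ => cos t/(1+cos t^2)^2)
      (((-sin θ)*(1+cos θ^2)^2 - cos θ*(2*(1+cos θ^2)*(2*cos θ*(-sin θ))))/((1+cos θ^2)^2)^2) θ :=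
    hu.div hd2 hden2
  have h4 : HasDerivAt (fun t : ℝ => (cos t)^3) (3*cos θ^2*(-sin θ)) θ := by
    have := hu.fun_pow 3
    simpa [mul_comm, mul_assoc, mul_left_comm] using this
  have hG := ((((h1.const_mul (-3:ℝ)).sub (h2.const_mul 3)).sub (h3.const_mul 2)).add
      (hu.const_mul ((5:ℝ)/2))).sub (h4.div_const 2)
  have hGG : GG = fun t => (-3) * arctan (cos t) - 3*(cos t/(1+cos t^2)) - 2*(cos t/(1+cos t^2)^2)
      + (5/2)*cos t - (cos t)^3/2 := by
    funext t; simp [GG]; ring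
  rw [hGG]
  refine hG.congr_deriv ?_
  have hs : sin θ^2 = 1 - cos θ^2 := by nlinarith [sin_sq_add_cos_sq θ]
  have hhalf : (1 - sin θ^2/2) = (1+cos θ^2)/2 := by rw [hs]; ring
  simp only [gg]
  rw [hhalf, hs]
  field_simp [hden]
  ring

lemma cont_gg : Continuous gg := by
  have h : ∀ θ : ℝ, (1 - sin θ^2/2) ≠ 0 := by
    intro θ; nlinarith [sin_sq_le_one θ]
  apply Continuous.mul continuous_const
  apply Continuous.mul (Real.continuous_sin)
  apply Continuous.sub
  apply Continuous.sub
  · exact Continuous.div continuous_const (by continuity) (fun θ => pow_ne_zero 3 (h θ))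
  · exact continuous_const
  · continuity

lemma integral_gg : ∫ θ in (0:ℝ)..π, gg θ = 3 * π / 2 := by
  rw [intervalIntegral.integral_eq_sub_of_hasDerivAt (fun θ _ => hasDerivAt_GG θ)
    (cont_gg.intervalIntegrable _ _)]
  simp [GG, Real.arctan_one, Real.arctan_neg]
  ring

noncomputable def qq (N : ℕ) (x : ℝ) : ℝ :=
  ((N:ℝ)+1)*((N:ℝ)+2)*(1-x)^2 + (2*(N:ℝ)+3)*x*(1-x) + x*(1+x)

lemma poly_closed (x : ℝ) (N : ℕ) :
    (1-x)^3 * ∑ k ∈ range N, ((k:ℝ)+1)*((k:ℝ)+2)*x^k = 2 - x^N * qq N x := by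
  induction N with
  | zero => simp [qq]; ring
  | succ n ih =>
    rw [sum_range_succ, mul_add, ih]
    simp only [qq, pow_succ]
    push_cast
    ring

lemma key (N : ℕ) (hN2 : 2 ≤ N) (x : ℝ) (hx0 : 0 ≤ x) (hx : x ≤ 1/2) :
    |2/(1-x)^3 - (2 + 6*x) - ∑ k ∈ Ico 2 N, ((k:ℝ)+1)*((k:ℝ)+2)*x^k|
      ≤ 8*(((N:ℝ)+2)*((N:ℝ)+3))*(1/2)^N := by
  have h1x : (1/2:ℝ) ≤ 1 - x := by linarith
  have hpos : (0:ℝ) < (1-x)^3 := by positivity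
  have hsum : ∑ k ∈ range N, ((k:ℝ)+1)*((k:ℝ)+2)*x^k
      = (2+6*x) + ∑ k ∈ Ico 2 N, ((k:ℝ)+1)*((k:ℝ)+2)*x^k := by
    rw [range_eq_Ico, ← Finset.sum_Ico_consecutive _ (by norm_num : (0:ℕ) ≤ 2) hN2]
    congr 1
    rw [← range_eq_Ico]
    rw [sum_range_succ, sum_range_one]
    norm_num
  have hr : ∑ k ∈ Ico 2 N, ((k:ℝ)+1)*((k:ℝ)+2)*x^k
      = (∑ k ∈ range N, ((k:ℝ)+1)*((k:ℝ)+2)*x^k) - (2+6*x) := by linarith [hsum]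
  have hc := poly_closed x N
  have hexpr : 2/(1-x)^3 - (2 + 6*x) - ∑ k ∈ Ico 2 N, ((k:ℝ)+1)*((k:ℝ)+2)*x^k
      = x^N * qq N x / (1-x)^3 := by
    rw [hr]
    field_simp
    linear_combination -hc
  rw [hexpr]
  -- bounds
  have hNc : (0:ℝ) ≤ (N:ℝ) := Nat.cast_nonneg N
  have hq0 : 0 ≤ qq N x := by
    have e1 : (0:ℝ) ≤ ((N:ℝ)+1)*((N:ℝ)+2)*(1-x)^2 := by positivity
    have e2 : (0:ℝ) ≤ (2*(N:ℝ)+3)*x*(1-x) :=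
      mul_nonneg (mul_nonneg (by positivity) hx0) (by linarith)
    have e3 : (0:ℝ) ≤ x*(1+x) := mul_nonneg hx0 (by linarith)
    simp only [qq]; linarith
  have hqb : qq N x ≤ ((N:ℝ)+2)*((N:ℝ)+3) := by
    have e1 : ((N:ℝ)+1)*((N:ℝ)+2)*(1-x)^2 ≤ ((N:ℝ)+1)*((N:ℝ)+2) :=
      mul_le_of_le_one_right (by positivity) (by nlinarith)
    have hx1 : x*(1-x) ≤ 1/2 := by nlinarith
    have e2 : (2*(N:ℝ)+3)*x*(1-x) ≤ (2*(N:ℝ)+3)*(1/2) := by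
      nlinarith [mul_le_mul_of_nonneg_left hx1 (show (0:ℝ) ≤ 2*(N:ℝ)+3 by positivity)]
    have e3 : x*(1+x) ≤ 3/4 := by nlinarith
    simp only [qq]
    nlinarith [hNc]
  have hxN : x^N ≤ (1/2:ℝ)^N := pow_le_pow_left₀ hx0 hx N
  have hxN0 : 0 ≤ x^N := pow_nonneg hx0 N
  have hA : x^N * qq N x ≤ (1/2:ℝ)^N * (((N:ℝ)+2)*((N:ℝ)+3)) :=
    mul_le_mul hxN hqb hq0 (by positivity)
  have hB : (1/8:ℝ) ≤ (1-x)^3 := by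
    have := pow_le_pow_left₀ (by norm_num : (0:ℝ) ≤ 1/2) h1x 3
    norm_num at this; linarith
  rw [abs_of_nonneg (by positivity)]
  rw [div_le_iff₀ hpos]
  nlinarith [mul_le_mul_of_nonneg_left hB (by positivity : (0:ℝ) ≤ 8*(((N:ℝ)+2)*((N:ℝ)+3))*(1/2)^N)]
theorem stmt3 :
    Tendsto (fun N => ∑ k ∈ Ico 2 N,
      (Nat.factorial (k + 2) : ℝ) / (Nat.doubleFactorial (2 * k + 1) : ℝ))
      atTop (nhds (3 * Real.pi / 2)) := by
  set S : ℕ → ℝ := fun N => ∑ k ∈ Ico 2 N,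
      (Nat.factorial (k + 2) : ℝ) / (Nat.doubleFactorial (2 * k + 1) : ℝ) with hSdef
  -- bound tends to zero
  have t2 : Tendsto (fun n : ℕ => ((n:ℝ))^2*(1/2:ℝ)^n) atTop (nhds 0) :=
    tendsto_pow_const_mul_const_pow_of_lt_one 2 (by norm_num) (by norm_num)
  have t1 : Tendsto (fun n : ℕ => ((n:ℝ))^1*(1/2:ℝ)^n) atTop (nhds 0) :=
    tendsto_pow_const_mul_const_pow_of_lt_one 1 (by norm_num) (by norm_num)
  have tg : Tendsto (fun n : ℕ => ((1:ℝ)/2)^n) atTop (nhds 0) :=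
    tendsto_pow_atTop_nhds_zero_of_lt_one (by norm_num) (by norm_num)
  have hbound : Tendsto (fun N : ℕ => 4*π*((((N:ℝ)+2)*((N:ℝ)+3))*(1/2:ℝ)^N)) atTop (nhds 0) := by
    have h := ((t2.add (t1.const_mul 5)).add (tg.const_mul 6)).const_mul (4*π)
    have heq : (fun N : ℕ => 4*π*((((N:ℝ)+2)*((N:ℝ)+3))*(1/2:ℝ)^N))
        = fun n : ℕ => (4*π) * (((n:ℝ)^2*(1/2:ℝ)^n + 5*((n:ℝ)^1*(1/2:ℝ)^n)) + 6*((1/2:ℝ)^n)) :=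
      funext fun n => by ring
    rw [heq]
    simpa using h
  -- main estimate
  have hmain : ∀ N : ℕ, 2 ≤ N →
      |S N - 3*π/2| ≤ 4*π*((((N:ℝ)+2)*((N:ℝ)+3))*(1/2:ℝ)^N) := by
    intro N hN2
    set f : ℝ → ℝ := fun θ => ∑ k ∈ Ico 2 N,
        ((((k:ℝ)+1)*((k:ℝ)+2)/2)) * (sin θ * (sin θ^2/2)^k) with hfdef
    have hck : ∀ k : ℕ, Continuous fun θ : ℝ =>
        ((((k:ℝ)+1)*((k:ℝ)+2)/2)) * (sin θ * (sin θ^2/2)^k) := fun k =>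
      continuous_const.mul (Real.continuous_sin.mul
        (((Real.continuous_sin.pow 2).div_const 2).pow k))
    have hfcont : Continuous f := by
      simp only [hfdef]
      exact continuous_finset_sum _ (fun k _ => hck k)
    have hS : S N = ∫ θ in (0:ℝ)..π, f θ := by
      simp only [hSdef]
      have h1 : ∀ k ∈ Ico 2 N, ((Nat.factorial (k+2) : ℝ) / ((2*k+1).doubleFactorial : ℝ))
          = ∫ θ in (0:ℝ)..π, ((((k:ℝ)+1)*((k:ℝ)+2)/2)) * (sin θ * (sin θ^2/2)^k) := fun k _ => by
        rw [termA k, intervalIntegral.integral_const_mul]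
      rw [Finset.sum_congr rfl h1]
      exact (intervalIntegral.integral_finset_sum
        (fun k _ => (hck k).intervalIntegrable 0 π)).symm
    have hsub : S N - 3*π/2 = ∫ θ in (0:ℝ)..π, (f θ - gg θ) := by
      rw [intervalIntegral.integral_sub (hfcont.intervalIntegrable 0 π)
        (cont_gg.intervalIntegrable 0 π), hS, integral_gg]
    rw [hsub]
    have hptw : ∀ θ ∈ Set.uIoc (0:ℝ) π, ‖f θ - gg θ‖ ≤ 4*((((N:ℝ)+2)*((N:ℝ)+3))*(1/2:ℝ)^N) := by
      intro θ hθ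
      rw [Set.uIoc_of_le pi_nonneg] at hθ
      have hsin0 : 0 ≤ sin θ := sin_nonneg_of_nonneg_of_le_pi hθ.1.le hθ.2
      have hsin1 : sin θ ≤ 1 := sin_le_one θ
      have hx0 : (0:ℝ) ≤ sin θ^2/2 := by positivity
      have hx : sin θ^2/2 ≤ 1/2 := by nlinarith [sin_sq_le_one θ]
      have hk := key N hN2 (sin θ^2/2) hx0 hx
      have hfθ : f θ = (1/2) * sin θ * ∑ k ∈ Ico 2 N, ((k:ℝ)+1)*((k:ℝ)+2)*(sin θ^2/2)^k := by
        simp only [hfdef]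
        rw [mul_sum]
        exact Finset.sum_congr rfl fun k _ => by ring
      have hrw : f θ - gg θ
          = -((1/2) * sin θ * (2/(1 - sin θ^2/2)^3 - (2 + 6*(sin θ^2/2))
              - ∑ k ∈ Ico 2 N, ((k:ℝ)+1)*((k:ℝ)+2)*(sin θ^2/2)^k)) := by
        rw [hfθ]
        simp only [gg]
        ring
      rw [hrw, Real.norm_eq_abs, abs_neg, abs_mul, abs_mul,
        abs_of_nonneg hsin0, abs_of_nonneg (by norm_num : (0:ℝ) ≤ (1/2:ℝ))]
      calc (1/2:ℝ) * sin θ * |2/(1 - sin θ^2/2)^3 - (2 + 6*(sin θ^2/2))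
              - ∑ k ∈ Ico 2 N, ((k:ℝ)+1)*((k:ℝ)+2)*(sin θ^2/2)^k|
          ≤ (1/2:ℝ) * 1 * (8*(((N:ℝ)+2)*((N:ℝ)+3))*(1/2:ℝ)^N) := by
            apply mul_le_mul _ hk (abs_nonneg _) (by norm_num)
            nlinarith
        _ = 4*((((N:ℝ)+2)*((N:ℝ)+3))*(1/2:ℝ)^N) := by ring
    calc |∫ θ in (0:ℝ)..π, (f θ - gg θ)|
        ≤ 4*((((N:ℝ)+2)*((N:ℝ)+3))*(1/2:ℝ)^N) * |π - 0| :=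
          intervalIntegral.norm_integral_le_of_norm_le_const hptw
      _ = 4*π*((((N:ℝ)+2)*((N:ℝ)+3))*(1/2:ℝ)^N) := by
          rw [sub_zero, abs_of_nonneg pi_nonneg]; ring
  have habs : Tendsto (fun N : ℕ => |S N - 3*π/2|) atTop (nhds 0) :=
    squeeze_zero' (Eventually.of_forall fun _ => abs_nonneg _)
      (by filter_upwards [eventually_ge_atTop 2] with N hN using hmain N hN) hbound
  have h0 : Tendsto (fun N : ℕ => S N - 3*π/2) atTop (nhds 0) := by
    rw [tendsto_zero_iff_abs_tendsto_zero]
    exact habs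
  have := h0.add_const (3*π/2)
  simpa using this
end

section
/- For all nonnegative integers m and n, ∑_{k=0}^∞ (k+2m)!(k+2n)!/(k!·(2k+2m+2n+1)!!) = π/2^{m+n+1} · (2m)!(2n)!/(m!·n!). -/
open Filter Finset Real

noncomputable def T (m n k : ℕ) : ℝ :=
  (Nat.factorial (k + 2 * m) : ℝ) * (Nat.factorial (k + 2 * n) : ℝ) /
    ((Nat.factorial k : ℝ) * (Nat.doubleFactorial (2 * k + 2 * m + 2 * n + 1) : ℝ))

lemma T_pos (m n k : ℕ) : 0 < T m n k := by
  unfold T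
  positivity

-- key telescoping identity
lemma key_s4 (m n k : ℕ) :
    T (m+1) n k + ((k:ℝ)+1) * T m n (k+1) = ((2*(m:ℝ)+1) + k) * T m n k := by
  unfold T
  have h1 : k + 2 * (m+1) = (k + 2*m) + 1 + 1 := by ring
  have h2 : (k+1) + 2 * m = (k + 2*m) + 1 := by ring
  have h3 : (k+1) + 2 * n = (k + 2*n) + 1 := by ring
  have h4 : 2 * k + 2 * (m+1) + 2 * n + 1 = (2*k + 2*m + 2*n + 1) + 2 := by ring
  have h5 : 2 * (k+1) + 2 * m + 2 * n + 1 = (2*k + 2*m + 2*n + 1) + 2 := by ring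
  rw [h1, h2, h3, h4, h5, Nat.factorial_succ, Nat.factorial_succ, Nat.factorial_succ,
    Nat.doubleFactorial_add_two, Nat.factorial_succ (k)]
  have hk : (Nat.factorial k : ℝ) ≠ 0 := by positivity
  have hdf : (Nat.doubleFactorial (2*k+2*m+2*n+1) : ℝ) ≠ 0 := by
    have := Nat.doubleFactorial_pos (2*k+2*m+2*n+1); positivity
  push_cast
  field_simp
  ring

lemma partial_sum (m n : ℕ) (N : ℕ) :
    ∑ k ∈ range N, T (m+1) n k
      = (2*(m:ℝ)+1) * ∑ k ∈ range N, T m n k - N * T m n N := by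
  induction N with
  | zero => simp
  | succ N ih =>
    rw [sum_range_succ, sum_range_succ, ih]
    have := key_s4 m n N
    push_cast
    linarith

lemma T_symm (m n k : ℕ) : T m n k = T n m k := by
  unfold T
  have h : 2 * k + 2 * m + 2 * n + 1 = 2 * k + 2 * n + 2 * m + 1 := by ring
  rw [h]; ring

-- ratio bound for summability
lemma ratio_bound (m n : ℕ) : ∀ᶠ (k : ℕ) in atTop,
    ‖((k:ℝ)+1+1) * T m n (k+1)‖ ≤ (3/4 : ℝ) * ‖((k:ℝ)+1) * T m n k‖ := by
  filter_upwards [eventually_ge_atTop (8*(m+n+1))] with k hk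
  have h1 : 0 < T m n k := T_pos m n k
  have h2 : 0 < T m n (k+1) := T_pos m n (k+1)
  rw [Real.norm_eq_abs, Real.norm_eq_abs, abs_of_pos (by positivity), abs_of_pos (by positivity)]
  -- T m n (k+1) = T m n k * (k+2m+1)(k+2n+1)/((k+1)(2k+2m+2n+3))
  have hTk : T m n (k+1) * (((k:ℝ)+1) * (2*k+2*m+2*n+3)) = T m n k * (((k:ℝ)+2*m+1) * (k+2*n+1)) := by
    unfold T
    have h2' : (k+1) + 2 * m = (k + 2*m) + 1 := by ring
    have h3 : (k+1) + 2 * n = (k + 2*n) + 1 := by ring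
    have h5 : 2 * (k+1) + 2 * m + 2 * n + 1 = (2*k + 2*m + 2*n + 1) + 2 := by ring
    rw [h2', h3, h5, Nat.factorial_succ, Nat.factorial_succ, Nat.doubleFactorial_add_two,
      Nat.factorial_succ k]
    have hk' : (Nat.factorial k : ℝ) ≠ 0 := by positivity
    have hdf : (Nat.doubleFactorial (2*k+2*m+2*n+1) : ℝ) ≠ 0 := by
      have := Nat.doubleFactorial_pos (2*k+2*m+2*n+1); positivity
    push_cast
    field_simp
    ring
  -- polynomial inequality
  have hpoly : 4*(((k:ℝ))+2) * ((k+2*m+1) * (k+2*n+1)) ≤ 3*((k:ℝ)+1)^2 * (2*k+2*m+2*n+3) := by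
    obtain ⟨c, rfl⟩ := Nat.exists_eq_add_of_le hk
    have hm : (0:ℝ) ≤ m := Nat.cast_nonneg m
    have hn : (0:ℝ) ≤ n := Nat.cast_nonneg n
    have hc : (0:ℝ) ≤ c := Nat.cast_nonneg c
    push_cast
    nlinarith [mul_nonneg hm hn, mul_nonneg hc hm, mul_nonneg hc hn,
      mul_nonneg (mul_nonneg hc hm) hn, mul_nonneg (mul_nonneg hc hc) hm,
      mul_nonneg (mul_nonneg hc hc) hn, mul_nonneg hc hc,
      mul_nonneg (mul_nonneg hc hc) hc, mul_nonneg (mul_nonneg hm hm) hn,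
      mul_nonneg (mul_nonneg hm hn) hn, mul_nonneg hm hm, mul_nonneg hn hn,
      mul_nonneg (mul_nonneg hc hm) hm, mul_nonneg (mul_nonneg hc hn) hn]
  have hB : (0:ℝ) < ((k:ℝ)+1) * (2*k+2*m+2*n+3) := by positivity
  rw [← mul_le_mul_iff_of_pos_right hB]
  have e1 : ((k:ℝ)+1+1) * T m n (k+1) * (((k:ℝ)+1) * (2*(k:ℝ)+2*m+2*n+3))
      = ((k:ℝ)+2) * (T m n k * (((k:ℝ)+2*m+1)*((k:ℝ)+2*n+1))) := by
    calc ((k:ℝ)+1+1) * T m n (k+1) * (((k:ℝ)+1) * (2*(k:ℝ)+2*m+2*n+3))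
        = ((k:ℝ)+2) * (T m n (k+1) * (((k:ℝ)+1) * (2*(k:ℝ)+2*m+2*n+3))) := by ring
      _ = _ := by rw [hTk]
  rw [e1]
  nlinarith [mul_le_mul_of_nonneg_right hpoly h1.le]

lemma summable_kT (m n : ℕ) : Summable (fun k : ℕ => ((k:ℝ)+1) * T m n k) := by
  apply summable_of_ratio_norm_eventually_le (by norm_num : (3/4:ℝ) < 1)
  filter_upwards [ratio_bound m n] with k hk
  convert hk using 3 <;> push_cast <;> rfl

lemma tendsto_NT (m n : ℕ) : Tendsto (fun N : ℕ => (N:ℝ) * T m n N) atTop (nhds 0) := by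
  have h := (summable_kT m n).tendsto_atTop_zero
  have : Tendsto (fun N : ℕ => (N:ℝ) * T m n N + T m n N) atTop (nhds 0) := by
    convert h using 2 with N; ring
  have h2 : Tendsto (fun N : ℕ => T m n N) atTop (nhds 0) := by
    have hs : Summable (fun k => T m n k) := by
      apply Summable.of_nonneg_of_le (fun k => (T_pos m n k).le) _ (summable_kT m n)
      intro k
      nlinarith [T_pos m n k, Nat.cast_nonneg (α := ℝ) k]
    exact hs.tendsto_atTop_zero
  have := this.sub h2
  simpa using this

noncomputable def L (m n : ℕ) : ℝ :=
  Real.pi / 2 ^ (m + n + 1) *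
    ((Nat.factorial (2 * m) : ℝ) * (Nat.factorial (2 * n) : ℝ)) /
    ((Nat.factorial m : ℝ) * (Nat.factorial n : ℝ))

lemma L_succ (m n : ℕ) : L (m+1) n = (2*(m:ℝ)+1) * L m n := by
  unfold L
  have h1 : 2 * (m+1) = (2*m) + 1 + 1 := by ring
  rw [h1, Nat.factorial_succ, Nat.factorial_succ, Nat.factorial_succ m]
  have h2 : m + 1 + n + 1 = (m + n + 1) + 1 := by ring
  rw [h2, pow_succ]
  have hm : (Nat.factorial m : ℝ) ≠ 0 := by positivity
  have hn : (Nat.factorial n : ℝ) ≠ 0 := by positivity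
  push_cast
  field_simp
  ring

lemma L_symm (m n : ℕ) : L m n = L n m := by
  unfold L
  rw [add_comm (m) (n)]
  ring

lemma step (m n : ℕ)
    (h : Tendsto (fun N => ∑ k ∈ range N, T m n k) atTop (nhds (L m n))) :
    Tendsto (fun N => ∑ k ∈ range N, T (m+1) n k) atTop (nhds (L (m+1) n)) := by
  have h2 : Tendsto (fun N : ℕ => (2*(m:ℝ)+1) * ∑ k ∈ range N, T m n k - N * T m n N)
      atTop (nhds ((2*(m:ℝ)+1) * L m n - 0)) := (h.const_mul _).sub (tendsto_NT m n)
  rw [sub_zero, ← L_succ] at h2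
  exact h2.congr (fun N => (partial_sum m n N).symm)

lemma prod_asc (n s : ℕ) : (∏ j ∈ Finset.range s, (n + j)) = n.ascFactorial s := by
  induction s with
  | zero => simp
  | succ s ih => rw [Finset.prod_range_succ, ih, Nat.ascFactorial_succ, mul_comm]

lemma beta_nat (k : ℕ) :
    (∫ x in (0:ℝ)..1, x^k * (1-x)^k) * (Nat.factorial (2*k+1) : ℝ)
      = (Nat.factorial k : ℝ)^2 := by
  have hu : 0 < Complex.re ((k:ℂ)+1) := by
    simp only [Complex.add_re, Complex.natCast_re, Complex.one_re]
    positivity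
  have h := Complex.betaIntegral_eval_nat_add_one_right hu k
  have hL : Complex.betaIntegral ((k:ℂ)+1) ((k:ℂ)+1)
      = ((∫ x in (0:ℝ)..1, x^k * (1-x)^k : ℝ) : ℂ) := by
    rw [Complex.betaIntegral, ← intervalIntegral.integral_ofReal]
    apply intervalIntegral.integral_congr
    intro x _
    simp only [add_sub_cancel_right, Complex.cpow_natCast]
    push_cast
    ring
  have hprod : (∏ j ∈ Finset.range (k+1), ((k:ℂ) + 1 + j))
      = (((k+1).ascFactorial (k+1) : ℕ) : ℂ) := by
    rw [← prod_asc]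
    push_cast
    ring
  have hfac : Nat.factorial k * (k+1).ascFactorial (k+1) = Nat.factorial (2*k+1) := by
    have := Nat.factorial_mul_ascFactorial k (k+1)
    rwa [show k + (k+1) = 2*k+1 by ring] at this
  have hasc : (((k+1).ascFactorial (k+1) : ℕ) : ℂ) ≠ 0 := by
    have h0 : 0 < Nat.factorial k * (k+1).ascFactorial (k+1) := by
      rw [hfac]; exact Nat.factorial_pos _
    have : (k+1).ascFactorial (k+1) ≠ 0 := by
      intro hz; rw [hz, mul_zero] at h0; exact lt_irrefl 0 h0
    exact_mod_cast this
  rw [hL, hprod] at h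
  have h2 : ((∫ x in (0:ℝ)..1, x^k * (1-x)^k : ℝ) : ℂ) * (((k+1).ascFactorial (k+1) : ℕ) : ℂ)
      = ((Nat.factorial k : ℕ) : ℂ) := by
    rw [h, div_mul_cancel₀ _ hasc]
  have h2r : (∫ x in (0:ℝ)..1, x^k * (1-x)^k) * ((k+1).ascFactorial (k+1) : ℝ)
      = (Nat.factorial k : ℝ) := by exact_mod_cast h2
  have hfacR : (Nat.factorial k : ℝ) * ((k+1).ascFactorial (k+1) : ℝ)
      = (Nat.factorial (2*k+1) : ℝ) := by exact_mod_cast hfac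
  calc (∫ x in (0:ℝ)..1, x^k * (1-x)^k) * (Nat.factorial (2*k+1) : ℝ)
      = (∫ x in (0:ℝ)..1, x^k * (1-x)^k) * ((Nat.factorial k : ℝ) * ((k+1).ascFactorial (k+1) : ℝ)) := by rw [hfacR]
    _ = ((∫ x in (0:ℝ)..1, x^k * (1-x)^k) * ((k+1).ascFactorial (k+1) : ℝ)) * (Nat.factorial k : ℝ) := by ring
    _ = (Nat.factorial k : ℝ)^2 := by rw [h2r]; ring

lemma ak_eval (k : ℕ) : (∫ x in (0:ℝ)..1, (2*x*(1-x))^k)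
    = (Nat.factorial k : ℝ) / (Nat.doubleFactorial (2*k+1) : ℝ) := by
  have h1 : (∫ x in (0:ℝ)..1, (2*x*(1-x))^k) = 2^k * ∫ x in (0:ℝ)..1, x^k * (1-x)^k := by
    rw [← intervalIntegral.integral_const_mul]
    apply intervalIntegral.integral_congr
    intro x _
    show (2*x*(1-x))^k = 2^k * (x^k*(1-x)^k)
    rw [show (2*x*(1-x)) = 2*(x*(1-x)) by ring, mul_pow, mul_pow]
  have hnat : Nat.factorial (2*k+1) = Nat.doubleFactorial (2*k+1) * (2^k * Nat.factorial k) := by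
    have := Nat.factorial_eq_mul_doubleFactorial (2*k)
    rwa [Nat.doubleFactorial_two_mul] at this
  have hb := beta_nat k
  have hdf : (Nat.doubleFactorial (2*k+1) : ℝ) ≠ 0 := by
    have := Nat.doubleFactorial_pos (2*k+1); positivity
  have hfk : (Nat.factorial k : ℝ) ≠ 0 := by positivity
  have hnatR : (Nat.factorial (2*k+1) : ℝ)
      = (Nat.doubleFactorial (2*k+1) : ℝ) * (2^k * (Nat.factorial k : ℝ)) := by
    exact_mod_cast hnat
  rw [h1]
  have h5 : (2^k * ∫ x in (0:ℝ)..1, x^k * (1-x)^k) * (Nat.doubleFactorial (2*k+1) : ℝ)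
      = (Nat.factorial k : ℝ) := by
    rw [hnatR] at hb
    apply mul_right_cancel₀ hfk
    linear_combination hb
  rw [eq_div_iff hdf]
  exact h5

lemma pi_half_integral : (∫ x in (0:ℝ)..1, (2*x^2 - 2*x + 1)⁻¹) = π/2 := by
  have hd : ∀ x ∈ Set.uIcc (0:ℝ) 1,
      HasDerivAt (fun y => arctan (2*y-1)) ((2*x^2-2*x+1)⁻¹) x := by
    intro x _
    have h2 : HasDerivAt (fun y : ℝ => 2*y-1) 2 x := by
      simpa using ((hasDerivAt_id x).const_mul (2:ℝ)).sub_const 1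
    have h := (Real.hasDerivAt_arctan (2*x-1)).comp x h2
    have hpos : (0:ℝ) < 1 + (2*x-1)^2 := by positivity
    have hq : (0:ℝ) < 2*x^2-2*x+1 := by nlinarith [sq_nonneg (2*x-1)]
    have heq : 1 / (1 + (2*x-1)^2) * 2 = (2*x^2-2*x+1)⁻¹ := by
      rw [div_mul_eq_mul_div, one_mul, div_eq_iff hpos.ne', eq_comm,
        inv_mul_eq_div, div_eq_iff hq.ne']
      ring
    rw [heq] at h
    exact h
  have hcont : Continuous fun x : ℝ => (2*x^2 - 2*x + 1)⁻¹ := by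
    apply Continuous.inv₀ (by continuity)
    intro x
    nlinarith [sq_nonneg (2*x-1)]
  rw [intervalIntegral.integral_eq_sub_of_hasDerivAt hd (hcont.intervalIntegrable 0 1)]
  norm_num [Real.arctan_one, Real.arctan_neg]
  ring

open MeasureTheory in
lemma hasSum_base : HasSum (fun k : ℕ => (Nat.factorial k : ℝ) / (Nat.doubleFactorial (2*k+1) : ℝ))
    (π/2) := by
  set μ : Measure ℝ := volume.restrict (Set.Ioc (0:ℝ) 1) with hμ
  have hcont : ∀ k : ℕ, Continuous (fun x : ℝ => (2*x*(1-x))^k) := by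
    intro k; continuity
  have h_int : ∀ k : ℕ, Integrable (fun x : ℝ => (2*x*(1-x))^k) μ :=
    fun k => (hcont k).integrableOn_Ioc
  have hbd : ∀ k : ℕ, ∀ x ∈ Set.Ioc (0:ℝ) 1, ‖(2*x*(1-x))^k‖ ≤ (1/2:ℝ)^k := by
    intro k x hx
    rw [norm_pow, Real.norm_eq_abs]
    apply pow_le_pow_left₀ (abs_nonneg _)
    rw [abs_le]
    constructor <;> nlinarith [hx.1, hx.2, sq_nonneg (2*x-1)]
  have h_norm_le : ∀ k : ℕ, (∫ x, ‖(2*x*(1-x))^k‖ ∂μ) ≤ (1/2:ℝ)^k := by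
    intro k
    have h1 : (∫ x in Set.Ioc (0:ℝ) 1, ‖(2*x*(1-x))^k‖) ≤ ∫ _x in Set.Ioc (0:ℝ) 1, (1/2:ℝ)^k :=
      setIntegral_mono_on ((h_int k).norm) (integrableOn_const (by simp))
        measurableSet_Ioc (hbd k)
    calc (∫ x, ‖(2*x*(1-x))^k‖ ∂μ) ≤ ∫ _x in Set.Ioc (0:ℝ) 1, (1/2:ℝ)^k := h1
      _ = (1/2:ℝ)^k := by
        rw [setIntegral_const, Real.volume_real_Ioc]
        norm_num
  have h_sum : Summable (fun k : ℕ => ∫ x, ‖(2*x*(1-x))^k‖ ∂μ) := by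
    apply Summable.of_nonneg_of_le (fun k => integral_nonneg (fun x => norm_nonneg _)) h_norm_le
    exact summable_geometric_of_lt_one (by norm_num) (by norm_num)
  have hswap := integral_tsum_of_summable_integral_norm h_int h_sum
  -- evaluate the RHS integral
  have hptw : ∀ x ∈ Set.Ioc (0:ℝ) 1, (∑' k : ℕ, (2*x*(1-x))^k) = (2*x^2-2*x+1)⁻¹ := by
    intro x hx
    rw [tsum_geometric_of_lt_one (by nlinarith [hx.1, hx.2]) (by nlinarith [hx.1, hx.2, sq_nonneg (2*x-1)])]
    congr 1
    ring
  have hrhs : (∫ x, (∑' k : ℕ, (2*x*(1-x))^k) ∂μ) = π/2 := by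
    rw [hμ]
    rw [setIntegral_congr_fun measurableSet_Ioc hptw]
    rw [← intervalIntegral.integral_of_le zero_le_one]
    exact pi_half_integral
  rw [hrhs] at hswap
  -- each integral equals the closed form
  have hterm : ∀ k : ℕ, (∫ x, (2*x*(1-x))^k ∂μ)
      = (Nat.factorial k : ℝ) / (Nat.doubleFactorial (2*k+1) : ℝ) := by
    intro k
    rw [hμ, ← intervalIntegral.integral_of_le zero_le_one]
    exact ak_eval k
  have hsummable : Summable (fun k : ℕ => ∫ x, (2*x*(1-x))^k ∂μ) := by
    apply Summable.of_norm_bounded h_sum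
    intro k
    exact norm_integral_le_integral_norm _
  have := hsummable.hasSum
  rw [show (∑' k : ℕ, ∫ x, (2*x*(1-x))^k ∂μ) = π/2 from hswap] at this
  convert this using 2 with k
  exact (hterm k).symm

lemma T_zero (k : ℕ) : T 0 0 k = (Nat.factorial k : ℝ) / (Nat.doubleFactorial (2*k+1) : ℝ) := by
  unfold T
  have hk : (Nat.factorial k : ℝ) ≠ 0 := by positivity
  have h : 2 * k + 2 * 0 + 2 * 0 + 1 = 2 * k + 1 := by ring
  rw [h, show k + 2 * 0 = k from by ring]
  have hdf : (Nat.doubleFactorial (2*k+1) : ℝ) ≠ 0 := by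
    have := Nat.doubleFactorial_pos (2*k+1); positivity
  field_simp

lemma base : Tendsto (fun N => ∑ k ∈ range N, T 0 0 k) atTop (nhds (L 0 0)) := by
  have h := hasSum_base.tendsto_sum_nat
  have hL : L 0 0 = π/2 := by
    unfold L
    norm_num [Nat.factorial]
  rw [hL]
  exact h.congr (fun N => by
    apply Finset.sum_congr rfl
    intro k _
    exact (T_zero k).symm)

lemma main_aux : ∀ m n : ℕ, Tendsto (fun N => ∑ k ∈ range N, T m n k) atTop (nhds (L m n)) := by
  have hswap : ∀ m n : ℕ, Tendsto (fun N => ∑ k ∈ range N, T m n k) atTop (nhds (L m n)) →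
      Tendsto (fun N => ∑ k ∈ range N, T n m k) atTop (nhds (L n m)) := by
    intro m n h
    rw [← L_symm]
    exact h.congr (fun N => Finset.sum_congr rfl (fun k _ => T_symm m n k))
  have hm0 : ∀ m : ℕ, Tendsto (fun N => ∑ k ∈ range N, T m 0 k) atTop (nhds (L m 0)) := by
    intro m
    induction m with
    | zero => exact base
    | succ m ih => exact step m 0 ih
  intro m n
  induction n with
  | zero => exact hm0 m
  | succ n ih => exact hswap (n+1) m (step n m (hswap m n ih))

theorem stmt4 (m n : ℕ) :
    Tendsto (fun N => ∑ k ∈ range N,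
      (Nat.factorial (k + 2 * m) : ℝ) * (Nat.factorial (k + 2 * n) : ℝ) /
        ((Nat.factorial k : ℝ) * (Nat.doubleFactorial (2 * k + 2 * m + 2 * n + 1) : ℝ)))
      atTop (nhds (Real.pi / 2 ^ (m + n + 1) *
        ((Nat.factorial (2 * m) : ℝ) * (Nat.factorial (2 * n) : ℝ)) /
        ((Nat.factorial m : ℝ) * (Nat.factorial n : ℝ)))) :=
  main_aux m n
end

section
/- The infinite series ∑_{k=0}^∞ [(1)_k (1/3)_k (5/3)_k / ((3/2)_k (7/6)_k (11/6)_k)] · (3k+2)/4^k converges to 5π/(4√3). -/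
open Filter Finset Real

/-- Pochhammer symbol (rising factorial) for a real base and natural index. -/
noncomputable def poch (x : ℝ) (k : ℕ) : ℝ := ∏ i ∈ Finset.range k, (x + i)

namespace S10

/-- Wallis-type integral -/
noncomputable def W (m : ℕ) : ℝ := ∫ x in (0:ℝ)..1, (1 - x^2)^m

lemma W_zero : W 0 = 1 := by simp [W]

lemma Wrec (m : ℕ) : (2*(m:ℝ)+3) * W (m+1) = (2*(m:ℝ)+2) * W m := by
  have key : ∀ x ∈ Set.uIcc (0:ℝ) 1, HasDerivAt (fun t : ℝ => t * (1-t^2)^(m+1))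
      ((2*(m:ℝ)+3) * (1-x^2)^(m+1) - (2*(m:ℝ)+2) * (1-x^2)^m) x := by
    intro x _
    have h1 : HasDerivAt (fun t : ℝ => 1 - t^2) (-(2*x)) x := by
      simpa [Pi.sub_def] using (hasDerivAt_const x (1:ℝ)).sub (hasDerivAt_pow 2 x)
    have h2 : HasDerivAt (fun t : ℝ => (1-t^2)^(m+1)) (((m:ℝ)+1) * (1-x^2)^m * (-(2*x))) x := by
      simpa [Pi.pow_def] using h1.pow (m+1)
    have h3 : HasDerivAt (fun t : ℝ => t * (1-t^2)^(m+1)) (1 * (1-x^2)^(m+1) + x * (((m:ℝ)+1) * (1-x^2)^m * (-(2*x)))) x := (hasDerivAt_id x).mul h2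
    convert h3 using 1
    have hp : (1-x^2)^(m+1) = (1-x^2)^m * (1-x^2) := pow_succ _ _
    rw [hp]; ring
  have hint : IntervalIntegrable (fun x : ℝ => (2*(m:ℝ)+3) * (1-x^2)^(m+1) - (2*(m:ℝ)+2) * (1-x^2)^m) MeasureTheory.volume 0 1 :=
    (Continuous.intervalIntegrable (by continuity) _ _)
  have h := intervalIntegral.integral_eq_sub_of_hasDerivAt key hint
  rw [intervalIntegral.integral_sub ((Continuous.intervalIntegrable (by continuity) _ _))
      ((Continuous.intervalIntegrable (by continuity) _ _)),
    intervalIntegral.integral_const_mul, intervalIntegral.integral_const_mul] at h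
  norm_num at h
  rw [W, W]; linarith

lemma poch_pos {x : ℝ} (hx : 0 < x) (k : ℕ) : 0 < poch x k := by
  apply Finset.prod_pos
  intro i _
  positivity

end S10

namespace S10

lemma TW2 (k : ℕ) :
    poch 1 k * poch (1/3) k * poch (5/3) k * ((3*(k:ℝ)+2) * ((2*(k:ℝ)+1) * (6*(k:ℝ)+5)))
    = 5/2 * (3*(k:ℝ)+2)^2 * W (3*k) * (poch (3/2) k * poch (7/6) k * poch (11/6) k) := by
  induction k with
  | zero => simp [poch, W_zero]; norm_num
  | succ k ih =>
    have h1 := Wrec (3*k); have h2 := Wrec (3*k+1); have h3 := Wrec (3*k+2)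
    push_cast at h1 h2 h3
    have hW3' : (6*(k:ℝ)+3)*(6*(k:ℝ)+5)*(6*(k:ℝ)+7) * W (3*k+3) = (6*(k:ℝ)+2)*(6*(k:ℝ)+4)*(6*(k:ℝ)+6) * W (3*k) := by
      have e : (3*k+2)+1 = 3*k+3 := by omega
      rw [e] at h3
      have e2 : (3*k+1)+1 = 3*k+2 := by omega
      rw [e2] at h2
      have e3 : (3*k)+1 = 3*k+1 := by omega
      rw [e3] at h1
      linear_combination (6*(k:ℝ)+3)*(6*(k:ℝ)+5)*h3 + (6*(k:ℝ)+3)*(6*(k:ℝ)+6)*h2 + (6*(k:ℝ)+4)*(6*(k:ℝ)+6)*h1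
    have e1 : poch 1 (k+1) = poch 1 k * (1 + k) := Finset.prod_range_succ _ _
    have e2 : poch (1/3) (k+1) = poch (1/3) k * (1/3 + k) := Finset.prod_range_succ _ _
    have e3 : poch (5/3) (k+1) = poch (5/3) k * (5/3 + k) := Finset.prod_range_succ _ _
    have e4 : poch (3/2) (k+1) = poch (3/2) k * (3/2 + k) := Finset.prod_range_succ _ _
    have e5 : poch (7/6) (k+1) = poch (7/6) k * (7/6 + k) := Finset.prod_range_succ _ _
    have e6 : poch (11/6) (k+1) = poch (11/6) k * (11/6 + k) := Finset.prod_range_succ _ _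
    have eidx : 3*(k+1) = 3*k+3 := by omega
    rw [e1, e2, e3, e4, e5, e6, eidx]
    push_cast
    have hC : ((6*(k:ℝ)+3)*(6*(k:ℝ)+5)*(6*(k:ℝ)+7)*(3*(k:ℝ)+2)) ≠ 0 := by positivity
    apply mul_left_cancel₀ hC
    linear_combination (3*(6*(k:ℝ)+7)*(1+(k:ℝ))*(1/3+(k:ℝ))*(5/3+(k:ℝ))*(3*(k:ℝ)+5)*(2*(k:ℝ)+3)*(6*(k:ℝ)+11)) * ih
      + (-(5/2)*(3*(k:ℝ)+5)^2*(3*(k:ℝ)+2)*(poch (3/2) k * poch (7/6) k * poch (11/6) k)*((3/2+(k:ℝ))*(7/6+(k:ℝ))*(11/6+(k:ℝ)))) * hW3'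

end S10

namespace S10

noncomputable def T (k : ℕ) : ℝ :=
  poch 1 k * poch (1/3) k * poch (5/3) k / (poch (3/2) k * poch (7/6) k * poch (11/6) k) * (3 * (k : ℝ) + 2) / 4 ^ k

lemma Jlem (k : ℕ) : (∫ x in (0:ℝ)..1, (3+x^4)*(1-x^2)^(3*k))
    = 4*W (3*k) - 2*W (3*k+1) + W (3*k+2) := by
  rw [W, W, W, ← intervalIntegral.integral_const_mul, ← intervalIntegral.integral_const_mul,
    ← intervalIntegral.integral_sub (Continuous.intervalIntegrable (by continuity) _ _)
      (Continuous.intervalIntegrable (by continuity) _ _),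
    ← intervalIntegral.integral_add (Continuous.intervalIntegrable (by continuity) _ _)
      (Continuous.intervalIntegrable (by continuity) _ _)]
  apply intervalIntegral.integral_congr
  intro x _
  simp only
  rw [pow_add, pow_add]
  ring

lemma Tform (k : ℕ) : T k = 5/8 * (1/4^k) * ∫ x in (0:ℝ)..1, (3+x^4)*(1-x^2)^(3*k) := by
  have h1 := Wrec (3*k); have h2 := Wrec (3*k+1)
  push_cast at h1 h2
  have e2 : (3*k+1)+1 = 3*k+2 := by omega
  rw [e2] at h2
  have jl := Jlem k
  set J := ∫ x in (0:ℝ)..1, (3+x^4)*(1-x^2)^(3*k) with hJdef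
  have hJ' : (6*(k:ℝ)+3)*(6*(k:ℝ)+5)*J = 12*(3*(k:ℝ)+2)^2 * W (3*k) := by
    linear_combination ((6*(k:ℝ)+3)*(6*(k:ℝ)+5))*jl + (6*(k:ℝ)+3)*h2 - (6*(k:ℝ)+6)*h1
  have tw := TW2 k
  set A := poch 1 k * poch (1/3) k * poch (5/3) k with hA
  set B := poch (3/2) k * poch (7/6) k * poch (11/6) k with hB
  have hBpos : 0 < B := by
    rw [hB]
    have p1 := poch_pos (by norm_num : (0:ℝ) < 3/2) k
    have p2 := poch_pos (by norm_num : (0:ℝ) < 7/6) k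
    have p3 := poch_pos (by norm_num : (0:ℝ) < 11/6) k
    positivity
  have key2 : ((6*(k:ℝ)+3)*(6*(k:ℝ)+5)) * (8*A*(3*(k:ℝ)+2)) = ((6*(k:ℝ)+3)*(6*(k:ℝ)+5)) * (5*J*B) := by
    linear_combination 24*tw - 5*B*hJ'
  have hCne : ((6*(k:ℝ)+3)*(6*(k:ℝ)+5)) ≠ 0 := by positivity
  have h8 : 8*A*(3*(k:ℝ)+2) = 5*J*B := mul_left_cancel₀ hCne key2
  rw [T]
  rw [← hA, ← hB]
  have hBne : B ≠ 0 := ne_of_gt hBpos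
  have h4 : (4:ℝ)^k ≠ 0 := by positivity
  field_simp
  linear_combination h8

end S10

namespace S10

lemma Dpos (x : ℝ) : 3 ≤ 4 - (1-x^2)^3 := by
  nlinarith [sq_nonneg x, mul_nonneg (sq_nonneg x) (sq_nonneg (x^2 - 3/2))]

lemma Dne (x : ℝ) : 4 - (1-x^2)^3 ≠ 0 := by have := Dpos x; linarith

lemma contF (N : ℕ) : Continuous (fun x : ℝ => (3+x^4)*(1-x^2)^(3*N)*(4/(4-(1-x^2)^3))) := by
  apply Continuous.mul (by continuity)
  exact Continuous.div continuous_const (by continuity) Dne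

noncomputable def r (N : ℕ) : ℝ :=
  5/8 * (1/4^N) * ∫ x in (0:ℝ)..1, (3+x^4)*(1-x^2)^(3*N)*(4/(4-(1-x^2)^3))

lemma rstep (N : ℕ) : r N - r (N+1) = T N := by
  have key : (∫ x in (0:ℝ)..1, (3+x^4)*(1-x^2)^(3*N)*(4/(4-(1-x^2)^3)))
      - (1/4) * (∫ x in (0:ℝ)..1, (3+x^4)*(1-x^2)^(3*(N+1))*(4/(4-(1-x^2)^3)))
      = ∫ x in (0:ℝ)..1, (3+x^4)*(1-x^2)^(3*N) := by
    rw [← intervalIntegral.integral_const_mul,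
      ← intervalIntegral.integral_sub ((contF N).intervalIntegrable _ _)
        (Continuous.intervalIntegrable (by exact (continuous_const.mul (contF (N+1)))) _ _)]
    apply intervalIntegral.integral_congr
    intro x _
    simp only
    have hD := Dne x
    have e : 3*(N+1) = 3*N+3 := by omega
    rw [e, pow_add]
    field_simp
  rw [Tform, r, r, pow_succ]
  linear_combination (5/8)*(1/4^N)*key

lemma Ssum (N : ℕ) : ∑ k ∈ Finset.range N, T k = r 0 - r N := by
  induction N with
  | zero => simp
  | succ N ih =>
    rw [Finset.sum_range_succ, ih]
    have := rstep N
    linarith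

lemma rbound (N : ℕ) : ‖r N‖ ≤ 10/3 * (1/4)^N := by
  have hb : ∀ x ∈ Set.uIoc (0:ℝ) 1, ‖(3+x^4)*(1-x^2)^(3*N)*(4/(4-(1-x^2)^3))‖ ≤ 16/3 := by
    intro x hx
    rw [Set.uIoc_of_le (by norm_num : (0:ℝ) ≤ 1)] at hx
    obtain ⟨hx0, hx1⟩ := hx
    have h1 : (0:ℝ) ≤ 1 - x^2 := by nlinarith
    have h2 : (1:ℝ) - x^2 ≤ 1 := by nlinarith
    have hD := Dpos x
    have hp1 : (0:ℝ) ≤ (1-x^2)^(3*N) := pow_nonneg h1 _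
    have hp2 : (1-x^2)^(3*N) ≤ 1 := pow_le_one₀ h1 h2
    have h3 : (0:ℝ) < 4 - (1-x^2)^3 := by linarith
    have h4 : 4/(4-(1-x^2)^3) ≤ 4/3 := by
      rw [div_le_div_iff₀ h3 (by norm_num)]
      linarith
    have h5 : (0:ℝ) ≤ 4/(4-(1-x^2)^3) := by positivity
    have h6 : (0:ℝ) ≤ 3 + x^4 := by positivity
    have h7 : 3 + x^4 ≤ 4 := by nlinarith
    rw [Real.norm_eq_abs, abs_of_nonneg (by positivity)]
    calc (3+x^4)*(1-x^2)^(3*N)*(4/(4-(1-x^2)^3))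
        ≤ 4 * 1 * (4/3) := by
          apply mul_le_mul _ h4 h5 (by norm_num)
          apply mul_le_mul h7 hp2 hp1 (by norm_num)
      _ = 16/3 := by norm_num
  have hI := intervalIntegral.norm_integral_le_of_norm_le_const hb
  rw [r]
  rw [norm_mul, norm_mul]
  have : ‖(5:ℝ)/8‖ = 5/8 := by norm_num
  rw [this]
  have h4N : ‖(1:ℝ)/4^N‖ = (1/4)^N := by
    rw [Real.norm_eq_abs, abs_of_pos (by positivity), one_div, ← inv_pow, inv_eq_one_div]
  rw [h4N]
  have : ‖∫ x in (0:ℝ)..1, (3+x^4)*(1-x^2)^(3*N)*(4/(4-(1-x^2)^3))‖ ≤ 16/3 := by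
    simpa using hI
  have hpos : (0:ℝ) < (1/4:ℝ)^N := by positivity
  nlinarith [this, hpos]

end S10

namespace S10

lemma sqrt3_pos : (0:ℝ) < Real.sqrt 3 := Real.sqrt_pos.mpr (by norm_num)

lemma sqrt3_sq : Real.sqrt 3 ^ 2 = 3 := Real.sq_sqrt (by norm_num)

noncomputable def G : ℝ → ℝ := fun t =>
  if t < 1 then (Real.sqrt 3)⁻¹ * Real.arctan ((3*t - t^3)/(Real.sqrt 3 * (1 - t^2)))
  else (Real.sqrt 3)⁻¹ * (Real.pi/2)

lemma Kval : (∫ x in (0:ℝ)..1, (3+x^4)/(4-(1-x^2)^3)) = (Real.sqrt 3)⁻¹ * (Real.pi/2) := by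
  have hs3 := sqrt3_pos
  have hs3' : Real.sqrt 3 ≠ 0 := ne_of_gt hs3
  have hderiv : ∀ x ∈ Set.Ioo (0:ℝ) 1,
      HasDerivWithinAt G ((3+x^4)/(4-(1-x^2)^3)) (Set.Ioi x) x := by
    intro x hx
    have hx1 : x < 1 := hx.2
    have h1x2 : (0:ℝ) < 1 - x^2 := by nlinarith [hx.1, hx.2]
    have hden : Real.sqrt 3 * (1 - x^2) ≠ 0 := by positivity
    have hnum : HasDerivAt (fun t : ℝ => 3*t - t^3) (3 - 3*x^2) x := by
      have := ((hasDerivAt_id x).const_mul (3:ℝ)).sub (hasDerivAt_pow 3 x)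
      simpa [Pi.sub_def] using this
    have hden' : HasDerivAt (fun t : ℝ => Real.sqrt 3 * (1 - t^2)) (Real.sqrt 3 * (-(2*x))) x := by
      have h0 : HasDerivAt (fun t : ℝ => 1 - t^2) (-(2*x)) x := by
        simpa [Pi.sub_def] using (hasDerivAt_const x (1:ℝ)).sub (hasDerivAt_pow 2 x)
      exact h0.const_mul _
    have hu := hnum.div hden' hden
    have harc := (Real.hasDerivAt_arctan ((3*x-x^3)/(Real.sqrt 3*(1-x^2)))).comp x hu
    have hfull := harc.const_mul ((Real.sqrt 3)⁻¹)
    have hev : G =ᶠ[nhds x]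
        (fun t => (Real.sqrt 3)⁻¹ * Real.arctan ((3*t-t^3)/(Real.sqrt 3*(1-t^2)))) := by
      filter_upwards [Iio_mem_nhds hx1] with t ht
      simp only [G]
      rw [if_pos (Set.mem_Iio.mp ht)]
    have hG2 : HasDerivAt G ((Real.sqrt 3)⁻¹ * (1 / (1 + ((3*x-x^3)/(Real.sqrt 3*(1-x^2)))^2) *
        (((3-3*x^2) * (Real.sqrt 3*(1-x^2)) - (3*x-x^3) * (Real.sqrt 3 * (-(2*x))))/(Real.sqrt 3*(1-x^2))^2))) x := by
      refine HasDerivAt.congr_of_eventuallyEq ?_ hev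
      exact hfull
    have heq : (Real.sqrt 3)⁻¹ * (1 / (1 + ((3*x-x^3)/(Real.sqrt 3*(1-x^2)))^2) *
        (((3-3*x^2) * (Real.sqrt 3*(1-x^2)) - (3*x-x^3) * (Real.sqrt 3 * (-(2*x))))/(Real.sqrt 3*(1-x^2))^2))
        = (3+x^4)/(4-(1-x^2)^3) := by
      have hD := Dne x
      have h1x2' : (1:ℝ) - x^2 ≠ 0 := ne_of_gt h1x2
      have hnum_simp : (3-3*x^2) * (Real.sqrt 3*(1-x^2)) - (3*x-x^3) * (Real.sqrt 3 * (-(2*x)))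
          = Real.sqrt 3 * (3+x^4) := by ring
      have hden_sq : (Real.sqrt 3*(1-x^2))^2 = 3*(1-x^2)^2 := by rw [mul_pow, sqrt3_sq]
      have hone : 1 + ((3*x-x^3)/(Real.sqrt 3*(1-x^2)))^2 = (4-(1-x^2)^3)/(3*(1-x^2)^2) := by
        rw [div_pow, hden_sq]
        field_simp
        ring
      rw [hnum_simp, hden_sq, hone]
      field_simp
    rw [heq] at hG2
    exact hG2.hasDerivWithinAt
  have hcontG : ContinuousOn G (Set.Icc 0 1) := by
    intro t ht
    rcases lt_or_eq_of_le ht.2 with h | h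
    · apply ContinuousAt.continuousWithinAt
      have h1t : (0:ℝ) < 1 - t^2 := by nlinarith [ht.1]
      have hca : ContinuousAt
          (fun s : ℝ => (Real.sqrt 3)⁻¹ * Real.arctan ((3*s-s^3)/(Real.sqrt 3*(1-s^2)))) t := by
        apply ContinuousAt.mul continuousAt_const
        apply Real.continuous_arctan.continuousAt.comp
        apply ContinuousAt.div (by fun_prop) (by fun_prop)
        positivity
      apply hca.congr
      filter_upwards [Iio_mem_nhds h] with s hs
      simp only [G]
      rw [if_pos (Set.mem_Iio.mp hs)]
    · have hG1 : G 1 = (Real.sqrt 3)⁻¹ * (Real.pi/2) := by simp [G]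
      subst h
      unfold ContinuousWithinAt
      rw [hG1]
      have hmono : nhdsWithin (1:ℝ) (Set.Icc 0 1) ≤ nhdsWithin 1 (Set.Ico 0 1 ∪ {1}) := by
        apply nhdsWithin_mono
        intro s hs
        rcases lt_or_eq_of_le hs.2 with h' | h'
        · exact Or.inl ⟨hs.1, h'⟩
        · exact Or.inr (by simp [h'])
      apply Filter.Tendsto.mono_left _ hmono
      rw [nhdsWithin_union]
      rw [Filter.tendsto_sup]
      constructor
      · have hd : Filter.Tendsto (fun s : ℝ => Real.sqrt 3 * (1 - s^2))
            (nhdsWithin 1 (Set.Ico 0 1)) (nhdsWithin 0 (Set.Ioi 0)) := by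
          rw [tendsto_nhdsWithin_iff]
          constructor
          · apply tendsto_nhdsWithin_of_tendsto_nhds
            have hc : Continuous (fun s : ℝ => Real.sqrt 3 * (1 - s^2)) := by continuity
            have := hc.tendsto 1
            simpa using this
          · filter_upwards [self_mem_nhdsWithin] with s hs
            have : (0:ℝ) < 1 - s^2 := by nlinarith [hs.1, hs.2]
            have : (0:ℝ) < Real.sqrt 3 * (1 - s^2) := by positivity
            exact this
        have hinv : Filter.Tendsto (fun s : ℝ => (Real.sqrt 3 * (1 - s^2))⁻¹)
            (nhdsWithin 1 (Set.Ico 0 1)) Filter.atTop := tendsto_inv_nhdsGT_zero.comp hd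
        have hnum : Filter.Tendsto (fun s : ℝ => 3*s - s^3)
            (nhdsWithin 1 (Set.Ico 0 1)) (nhds 2) := by
          apply tendsto_nhdsWithin_of_tendsto_nhds
          have hc : Continuous (fun s : ℝ => 3*s - s^3) := by continuity
          have := hc.tendsto 1
          norm_num at this
          exact this
        have huat : Filter.Tendsto (fun s : ℝ => (3*s-s^3)/(Real.sqrt 3*(1-s^2)))
            (nhdsWithin 1 (Set.Ico 0 1)) Filter.atTop := by
          have := Filter.Tendsto.pos_mul_atTop (show (0:ℝ) < 2 by norm_num) hnum hinv
          simpa [div_eq_mul_inv] using this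
        have harct : Filter.Tendsto
            (fun s : ℝ => (Real.sqrt 3)⁻¹ * Real.arctan ((3*s-s^3)/(Real.sqrt 3*(1-s^2))))
            (nhdsWithin 1 (Set.Ico 0 1)) (nhds ((Real.sqrt 3)⁻¹ * (Real.pi/2))) := by
          apply Filter.Tendsto.const_mul
          exact (Real.tendsto_arctan_atTop.mono_right nhdsWithin_le_nhds).comp huat
        apply Filter.Tendsto.congr' _ harct
        filter_upwards [self_mem_nhdsWithin] with s hs
        simp only [G]
        rw [if_pos hs.2]
      · rw [nhdsWithin_singleton]
        have : G 1 = (Real.sqrt 3)⁻¹ * (Real.pi/2) := by simp [G]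
        rw [← this]
        exact tendsto_pure_nhds G 1
  have hint : IntervalIntegrable (fun x : ℝ => (3+x^4)/(4-(1-x^2)^3)) MeasureTheory.volume 0 1 := by
    apply Continuous.intervalIntegrable
    exact Continuous.div (by continuity) (by continuity) Dne
  have h := intervalIntegral.integral_eq_sub_of_hasDeriv_right_of_le zero_le_one hcontG hderiv hint
  rw [h]
  have hG1 : G 1 = (Real.sqrt 3)⁻¹ * (Real.pi/2) := by simp [G]
  have hG0 : G 0 = 0 := by
    simp [G]
  rw [hG1, hG0, sub_zero]

lemma Mval : r 0 = 5 * Real.pi / (4 * Real.sqrt 3) := by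
  have h4 : (∫ x in (0:ℝ)..1, (3+x^4)*(1-x^2)^(3*0)*(4/(4-(1-x^2)^3)))
      = 4 * ∫ x in (0:ℝ)..1, (3+x^4)/(4-(1-x^2)^3) := by
    rw [← intervalIntegral.integral_const_mul]
    apply intervalIntegral.integral_congr
    intro x _
    simp only
    rw [Nat.mul_zero, pow_zero]
    field_simp
  rw [r, h4, Kval]
  have hs3' : Real.sqrt 3 ≠ 0 := ne_of_gt sqrt3_pos
  field_simp
  ring

end S10

theorem stmt10 :
    Tendsto (fun N => ∑ k ∈ range N,
      poch 1 k * poch (1/3) k * poch (5/3) k / (poch (3/2) k * poch (7/6) k * poch (11/6) k) * (3 * (k : ℝ) + 2) / 4 ^ k)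
      atTop (nhds (5 * Real.pi / (4 * Real.sqrt 3))) := by
  have hr : Tendsto (fun N => S10.r N) atTop (nhds 0) := by
    apply squeeze_zero_norm S10.rbound
    have h1 : Tendsto (fun N : ℕ => (1/4:ℝ)^N) atTop (nhds 0) :=
      tendsto_pow_atTop_nhds_zero_of_lt_one (by norm_num) (by norm_num)
    have h2 := h1.const_mul (10/3:ℝ)
    simpa using h2
  rw [show (5 * Real.pi / (4 * Real.sqrt 3)) = S10.r 0 from S10.Mval.symm]
  have key : Tendsto (fun N => S10.r 0 - S10.r N) atTop (nhds (S10.r 0)) := by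
    have h3 := (tendsto_const_nhds (x := S10.r 0) (f := atTop (α := ℕ))).sub hr
    simpa using h3
  apply key.congr
  intro N
  exact (S10.Ssum N).symm
end

section
/- The infinite series ∑_{k=0}^∞ [(1)_k³/(3/2)_k³] · (3k+2)/4^k converges to π²/4. -/
open Filter Finset Real

namespace Stmt15

noncomputable def Phi (n k : ℕ) : ℝ :=
  16 ^ n * (Nat.factorial n : ℝ) ^ 4 * (Nat.factorial (n + k) : ℝ) ^ 2
      * (Nat.factorial (2 * k) : ℝ) ^ 2 /
    ((Nat.factorial (2 * (n + k) + 1) : ℝ) ^ 2 * (Nat.factorial (2 * n + 1) : ℝ)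
      * (Nat.factorial k : ℝ) ^ 2)

lemma fact_cast_pos (m : ℕ) : (0:ℝ) < (Nat.factorial m : ℝ) := by
  exact_mod_cast Nat.factorial_pos m

lemma fact_cast_succ (m : ℕ) : (Nat.factorial (m + 1) : ℝ) = ((m:ℝ) + 1) * Nat.factorial m := by
  rw [Nat.factorial_succ]; push_cast; ring

lemma Phi_pos (n k : ℕ) : 0 < Phi n k := by
  unfold Phi
  have h1 := fact_cast_pos (2 * (n + k) + 1)
  have h2 := fact_cast_pos (2 * n + 1)
  have h3 := fact_cast_pos k
  have h4 := fact_cast_pos (n + k)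
  have h5 := fact_cast_pos n
  have h6 := fact_cast_pos (2 * k)
  positivity

lemma Phi_succ_left (n k : ℕ) :
    Phi (n + 1) k = Phi n k * (2 * ((n:ℝ) + 1) ^ 3) /
      ((2 * n + 3) * (2 * (n:ℝ) + 2 * k + 3) ^ 2) := by
  have e1 : (n + 1) + k = (n + k) + 1 := by ring
  have e2 : 2 * ((n + k) + 1) + 1 = ((2 * (n + k) + 1) + 1) + 1 := by ring
  have e3 : 2 * (n + 1) + 1 = ((2 * n + 1) + 1) + 1 := by ring
  have hD := (fact_cast_pos (2 * (n + k) + 1)).ne'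
  have hE := (fact_cast_pos (2 * n + 1)).ne'
  have hK := (fact_cast_pos k).ne'
  unfold Phi
  rw [e1, e2, e3]
  simp only [fact_cast_succ]
  generalize (Nat.factorial (2 * (n + k) + 1) : ℝ) = D at *
  generalize (Nat.factorial (2 * n + 1) : ℝ) = E at *
  generalize (Nat.factorial k : ℝ) = K at *
  generalize (Nat.factorial (n + k) : ℝ) = B at *
  generalize (Nat.factorial n : ℝ) = A at *
  have h6 : (2 * (n:ℝ) + 3) ≠ 0 := by positivity
  have h7 : (2 * (n:ℝ) + 2 * k + 3) ≠ 0 := by positivity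
  push_cast
  field_simp
  ring

lemma Phi_succ_right (n k : ℕ) :
    Phi n (k + 1) = Phi n k * (2 * (k:ℝ) + 1) ^ 2 / (2 * (n:ℝ) + 2 * k + 3) ^ 2 := by
  have e1 : n + (k + 1) = (n + k) + 1 := by ring
  have e2 : 2 * ((n + k) + 1) + 1 = ((2 * (n + k) + 1) + 1) + 1 := by ring
  have e3 : 2 * (k + 1) = ((2 * k) + 1) + 1 := by ring
  have hD := (fact_cast_pos (2 * (n + k) + 1)).ne'
  have hE := (fact_cast_pos (2 * n + 1)).ne'
  have hK := (fact_cast_pos k).ne'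
  have hC := (fact_cast_pos (2 * k)).ne'
  unfold Phi
  rw [e1, e2, e3]
  simp only [fact_cast_succ]
  generalize (Nat.factorial (2 * (n + k) + 1) : ℝ) = D at *
  generalize (Nat.factorial (2 * n + 1) : ℝ) = E at *
  generalize (Nat.factorial (2 * k) : ℝ) = C at *
  generalize (Nat.factorial k : ℝ) = K at *
  generalize (Nat.factorial (n + k) : ℝ) = B at *
  generalize (Nat.factorial n : ℝ) = A at *
  have h7 : (2 * (n:ℝ) + 2 * k + 3) ≠ 0 := by positivity
  push_cast
  field_simp
  ring

/-- The WZ identity. -/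
lemma wz (n k : ℕ) :
    2 * (2 * (n:ℝ) + 1) * Phi n k - 2 * (2 * (n:ℝ) + 3) * Phi (n + 1) k
      = (3 * (n:ℝ) + 2 * k + 2) * Phi n k - (3 * (n:ℝ) + 2 * (k:ℝ) + 4) * Phi n (k + 1) := by
  rw [Phi_succ_left, Phi_succ_right]
  have h6 : (2 * (n:ℝ) + 3) ≠ 0 := by positivity
  have h7 : (2 * (n:ℝ) + 2 * k + 3) ≠ 0 := by positivity
  field_simp
  ring

/-- Bound: `Phi n k * (2k+1)^2 ≤ Phi n 0`. -/
lemma Phi_bound (n : ℕ) : ∀ k : ℕ, Phi n k * (2 * (k:ℝ) + 1) ^ 2 ≤ Phi n 0 := by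
  intro k
  induction k with
  | zero => simp
  | succ k ih =>
    have h := Phi_succ_right n k
    have hpos := Phi_pos n k
    have key : Phi n (k + 1) * (2 * ((k:ℝ) + 1) + 1) ^ 2 ≤ Phi n k * (2 * (k:ℝ) + 1) ^ 2 := by
      rw [h]
      rw [div_mul_eq_mul_div, div_le_iff₀ (by positivity)]
      have hle : (2 * (k:ℝ) + 3) ^ 2 ≤ (2 * (n:ℝ) + 2 * k + 3) ^ 2 := by
        have h0 : (2 * (k:ℝ) + 3) ≤ (2 * (n:ℝ) + 2 * k + 3) := by
          have : (0:ℝ) ≤ (n:ℝ) := Nat.cast_nonneg n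
          nlinarith
        nlinarith [h0]
      have hX : (0:ℝ) ≤ Phi n k * (2 * (k:ℝ) + 1) ^ 2 := by positivity
      nlinarith [mul_le_mul_of_nonneg_left hle hX]
    push_cast
    push_cast at key
    linarith [key, ih]

lemma summable_odd_inv_sq : Summable (fun k : ℕ => 1 / (2 * (k:ℝ) + 1) ^ 2) := by
  have h1 : Summable (fun k : ℕ => 1 / ((k:ℝ) + 1) ^ 2) := by
    have := (Real.summable_one_div_nat_pow (p := 2)).mpr one_lt_two
    have h2 := (summable_nat_add_iff (f := fun n : ℕ => 1 / (n:ℝ) ^ 2) 1).mpr this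
    simpa using h2
  refine h1.of_nonneg_of_le (fun k => by positivity) (fun k => ?_)
  have hk : ((k:ℝ) + 1) ^ 2 ≤ (2 * (k:ℝ) + 1) ^ 2 := by nlinarith [Nat.cast_nonneg (α := ℝ) k]
  have h0 : (0:ℝ) < ((k:ℝ) + 1) ^ 2 := by positivity
  exact one_div_le_one_div_of_le h0 hk

lemma summable_Phi (n : ℕ) : Summable (fun k => Phi n k) := by
  refine summable_odd_inv_sq.mul_left (Phi n 0) |>.of_nonneg_of_le
    (fun k => (Phi_pos n k).le) (fun k => ?_)
  have hb := Phi_bound n k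
  have h0 : (0:ℝ) < (2 * (k:ℝ) + 1) ^ 2 := by positivity
  rw [mul_one_div, le_div_iff₀ h0]
  exact hb

/-- The odd Basel sum. -/
lemma hasSum_odd_inv_sq : HasSum (fun k : ℕ => 1 / (2 * (k:ℝ) + 1) ^ 2) (π ^ 2 / 8) := by
  have h2 : HasSum (fun n : ℕ => (1:ℝ) / (n:ℝ) ^ 2) (π ^ 2 / 6) := hasSum_zeta_two
  have he : HasSum (fun k : ℕ => (1:ℝ) / ((2 * k : ℕ):ℝ) ^ 2) (1/4 * (π ^ 2 / 6)) := by
    have h3 := h2.mul_left (1/4)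
    have heq : (fun k : ℕ => 1/4 * ((1:ℝ) / (k:ℝ) ^ 2)) = fun k : ℕ => (1:ℝ) / ((2 * k : ℕ):ℝ) ^ 2 := by
      funext k
      push_cast
      rw [mul_pow, one_div, one_div, one_div, mul_inv]
      norm_num
    rw [heq] at h3
    exact h3
  set s := ∑' k : ℕ, (1:ℝ) / (2 * (k:ℝ) + 1) ^ 2 with hs
  have hsum := summable_odd_inv_sq
  have ho : HasSum (fun k : ℕ => (1:ℝ) / ((2 * k + 1 : ℕ):ℝ) ^ 2) s := by
    have heq : (fun k : ℕ => (1:ℝ) / ((2 * k + 1 : ℕ):ℝ) ^ 2)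
        = fun k : ℕ => (1:ℝ) / (2 * (k:ℝ) + 1) ^ 2 := by
      funext k; push_cast; ring
    rw [heq, hs]
    exact hsum.hasSum
  have htot := HasSum.even_add_odd (f := fun n : ℕ => (1:ℝ) / (n:ℝ) ^ 2) he ho
  have huni : π ^ 2 / 6 = 1/4 * (π ^ 2 / 6) + s := h2.unique htot
  have hval : s = π ^ 2 / 8 := by linarith
  rw [← hval]
  exact hsum.hasSum

noncomputable def T (n : ℕ) : ℝ := ∑' k, 2 * (2 * (n:ℝ) + 1) * Phi n k

lemma summable_F (n : ℕ) : Summable (fun k => 2 * (2 * (n:ℝ) + 1) * Phi n k) :=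
  (summable_Phi n).mul_left _

lemma G_tendsto_zero (n : ℕ) :
    Tendsto (fun k : ℕ => (3 * (n:ℝ) + 2 * k + 2) * Phi n k) atTop (nhds 0) := by
  have hup : ∀ k : ℕ, (3 * (n:ℝ) + 2 * k + 2) * Phi n k
      ≤ (3 * (n:ℝ) + 2) * Phi n 0 / (2 * (k:ℝ) + 1) := by
    intro k
    rw [le_div_iff₀ (by positivity)]
    have hb := Phi_bound n k
    have hp := (Phi_pos n k).le
    have hn : (0:ℝ) ≤ (n:ℝ) := Nat.cast_nonneg n
    have hk : (0:ℝ) ≤ (k:ℝ) := Nat.cast_nonneg k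
    nlinarith [hb, hp, hn, hk, mul_nonneg hn hk, mul_nonneg (mul_nonneg hn hk) hp,
      mul_nonneg hk hp, mul_nonneg hn hp]
  have hlow : ∀ k : ℕ, 0 ≤ (3 * (n:ℝ) + 2 * k + 2) * Phi n k := by
    intro k
    have := (Phi_pos n k).le
    have hn : (0:ℝ) ≤ (n:ℝ) := Nat.cast_nonneg n
    have hk : (0:ℝ) ≤ (k:ℝ) := Nat.cast_nonneg k
    positivity
  have hg : Tendsto (fun k : ℕ => (3 * (n:ℝ) + 2) * Phi n 0 / (2 * (k:ℝ) + 1)) atTop (nhds 0) := by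
    have h1 : Tendsto (fun k : ℕ => 2 * (k:ℝ) + 1) atTop atTop := by
      apply tendsto_atTop_add_const_right
      exact (tendsto_natCast_atTop_atTop (R := ℝ)).const_mul_atTop two_pos
    have h2 := h1.inv_tendsto_atTop
    have := h2.const_mul ((3 * (n:ℝ) + 2) * Phi n 0)
    simpa [div_eq_mul_inv] using this
  exact squeeze_zero hlow hup hg

/-- Key recursion: `T n = (3n+2) * Phi n 0 + T (n+1)`. -/
lemma T_step (n : ℕ) : T n = (3 * (n:ℝ) + 2) * Phi n 0 + T (n + 1) := by
  have hF := summable_F n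
  have hF' := summable_F (n + 1)
  have hD : Summable (fun k => 2 * (2 * (n:ℝ) + 1) * Phi n k
      - 2 * (2 * ((n+1:ℕ):ℝ) + 1) * Phi (n + 1) k) := hF.sub hF'
  have hpartial : ∀ K : ℕ, ∑ k ∈ range K,
      (2 * (2 * (n:ℝ) + 1) * Phi n k - 2 * (2 * ((n+1:ℕ):ℝ) + 1) * Phi (n + 1) k)
      = (3 * (n:ℝ) + 2 * (0:ℕ) + 2) * Phi n 0 - (3 * (n:ℝ) + 2 * (K:ℕ) + 2) * Phi n K := by
    intro K
    have := Finset.sum_range_sub' (fun k : ℕ => (3 * (n:ℝ) + 2 * (k:ℝ) + 2) * Phi n k) K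
    rw [← this]
    apply Finset.sum_congr rfl
    intro k _
    have hwz := wz n k
    push_cast
    push_cast at hwz
    linarith [hwz]
  have h1 : Tendsto (fun K : ℕ => ∑ k ∈ range K,
      (2 * (2 * (n:ℝ) + 1) * Phi n k - 2 * (2 * ((n+1:ℕ):ℝ) + 1) * Phi (n + 1) k)) atTop
      (nhds (∑' k, (2 * (2 * (n:ℝ) + 1) * Phi n k - 2 * (2 * ((n+1:ℕ):ℝ) + 1) * Phi (n + 1) k))) :=
    hD.hasSum.tendsto_sum_nat
  have h2 : Tendsto (fun K : ℕ => ∑ k ∈ range K,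
      (2 * (2 * (n:ℝ) + 1) * Phi n k - 2 * (2 * ((n+1:ℕ):ℝ) + 1) * Phi (n + 1) k)) atTop
      (nhds ((3 * (n:ℝ) + 2) * Phi n 0)) := by
    have heq : (fun K : ℕ => ∑ k ∈ range K,
        (2 * (2 * (n:ℝ) + 1) * Phi n k - 2 * (2 * ((n+1:ℕ):ℝ) + 1) * Phi (n + 1) k))
        = fun K : ℕ => (3 * (n:ℝ) + 2 * (0:ℕ) + 2) * Phi n 0 - (3 * (n:ℝ) + 2 * (K:ℕ) + 2) * Phi n K := by
      funext K; exact hpartial K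
    rw [heq]
    have := (G_tendsto_zero n)
    have h3 := tendsto_const_nhds (α := ℕ) (f := atTop)
      (x := (3 * (n:ℝ) + 2 * (0:ℕ) + 2) * Phi n 0) |>.sub this
    simpa using h3
  have heq : (∑' k, (2 * (2 * (n:ℝ) + 1) * Phi n k - 2 * (2 * ((n+1:ℕ):ℝ) + 1) * Phi (n + 1) k))
      = (3 * (n:ℝ) + 2) * Phi n 0 := tendsto_nhds_unique h1 h2
  have hsub := Summable.tsum_sub hF hF'
  unfold T
  push_cast at heq hsub ⊢
  linarith [heq, hsub]

lemma Phi_zero_right (n : ℕ) :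
    Phi n 0 = 16 ^ n * (Nat.factorial n : ℝ) ^ 6 / (Nat.factorial (2 * n + 1) : ℝ) ^ 3 := by
  unfold Phi
  simp [Nat.factorial]
  have hE := (fact_cast_pos (2 * n + 1)).ne'
  have hA := (fact_cast_pos n).ne'
  field_simp

lemma Phi_zero_left (k : ℕ) : Phi 0 k = 1 / (2 * (k:ℝ) + 1) ^ 2 := by
  unfold Phi
  have e2 : 2 * (0 + k) + 1 = (2 * k) + 1 := by ring
  have e3 : (0:ℕ) + k = k := by ring
  rw [e2, e3, fact_cast_succ]
  have hC := (fact_cast_pos (2 * k)).ne'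
  have hK := (fact_cast_pos k).ne'
  simp [Nat.factorial]
  field_simp

lemma T_zero : T 0 = π ^ 2 / 4 := by
  unfold T
  have h := (hasSum_odd_inv_sq.mul_left 2).tsum_eq
  have heq : (fun k : ℕ => 2 * (2 * ((0:ℕ):ℝ) + 1) * Phi 0 k)
      = fun k : ℕ => 2 * (1 / (2 * (k:ℝ) + 1) ^ 2) := by
    funext k
    rw [Phi_zero_left]
    norm_num
  rw [heq, h]
  ring

lemma T_nonneg (n : ℕ) : 0 ≤ T n :=
  tsum_nonneg fun k => by
    have := (Phi_pos n k).le
    have hn : (0:ℝ) ≤ (n:ℝ) := Nat.cast_nonneg n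
    positivity

lemma x_bound : ∀ n : ℕ, (2 * (n:ℝ) + 1) * Phi n 0 ≤ (1/2) ^ n := by
  intro n
  induction n with
  | zero =>
    have : Phi 0 0 = 1 := by
      unfold Phi
      norm_num [Nat.factorial]
    rw [this]; norm_num
  | succ n ih =>
    have h := Phi_succ_left n 0
    have hpos := Phi_pos n 0
    have hn : (0:ℝ) ≤ (n:ℝ) := Nat.cast_nonneg n
    have key : (2 * ((n:ℝ) + 1) + 1) * Phi (n + 1) 0 ≤ (1/2) * ((2 * (n:ℝ) + 1) * Phi n 0) := by
      rw [h]
      have heq : (2 * ((n:ℝ) + 1) + 1) * (Phi n 0 * (2 * ((n:ℝ) + 1) ^ 3) /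
          ((2 * (n:ℝ) + 3) * (2 * (n:ℝ) + 2 * ((0:ℕ):ℝ) + 3) ^ 2))
          = ((2 * (n:ℝ) + 3) * (2 * ((n:ℝ) + 1) ^ 3) * Phi n 0) /
            ((2 * (n:ℝ) + 3) * (2 * (n:ℝ) + 3) ^ 2) := by
        push_cast; ring
      rw [heq, div_le_iff₀ (by positivity)]
      have hpoly : 4 * ((n:ℝ) + 1) ^ 3 ≤ (2 * (n:ℝ) + 1) * (2 * (n:ℝ) + 3) ^ 2 := by nlinarith [hn]
      nlinarith [mul_le_mul_of_nonneg_left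
        (mul_le_mul_of_nonneg_right hpoly hpos.le)
        (by positivity : (0:ℝ) ≤ 2 * (n:ℝ) + 3)]
    push_cast
    push_cast at key
    rw [pow_succ]
    nlinarith [key, ih]

lemma T_le (n : ℕ) : T n ≤ π ^ 2 / 4 * (1/2) ^ n := by
  set c : ℝ := 2 * (2 * (n:ℝ) + 1) * Phi n 0 with hc
  have hcpos : 0 < c := by
    rw [hc]; have := Phi_pos n 0; positivity
  have hle : ∀ k : ℕ, 2 * (2 * (n:ℝ) + 1) * Phi n k ≤ c * (1 / (2 * (k:ℝ) + 1) ^ 2) := by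
    intro k
    have hb := Phi_bound n k
    have h0 : (0:ℝ) < (2 * (k:ℝ) + 1) ^ 2 := by positivity
    have hP : Phi n k ≤ Phi n 0 * (1 / (2 * (k:ℝ) + 1) ^ 2) := by
      rw [mul_one_div, le_div_iff₀ h0]; exact hb
    calc 2 * (2 * (n:ℝ) + 1) * Phi n k = (2 * (2 * (n:ℝ) + 1)) * Phi n k := by ring
      _ ≤ (2 * (2 * (n:ℝ) + 1)) * (Phi n 0 * (1 / (2 * (k:ℝ) + 1) ^ 2)) :=
          mul_le_mul_of_nonneg_left hP (by positivity)
      _ = c * (1 / (2 * (k:ℝ) + 1) ^ 2) := by rw [hc]; ring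
  have h1 : T n ≤ c * (π ^ 2 / 8) := by
    have hts := Summable.tsum_le_tsum hle (summable_F n) (summable_odd_inv_sq.mul_left c)
    calc T n ≤ ∑' k : ℕ, c * (1 / (2 * (k:ℝ) + 1) ^ 2) := hts
      _ = c * (π ^ 2 / 8) := (hasSum_odd_inv_sq.mul_left c).tsum_eq
  have h2 : c * (π ^ 2 / 8) ≤ π ^ 2 / 4 * (1/2) ^ n := by
    have hx := x_bound n
    have hpi : (0:ℝ) ≤ π ^ 2 / 4 := by positivity
    have := mul_le_mul_of_nonneg_left hx hpi
    rw [hc]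
    nlinarith [this]
  linarith

lemma T_tendsto_zero : Tendsto T atTop (nhds 0) := by
  have hup : Tendsto (fun n : ℕ => π ^ 2 / 4 * (1/2) ^ n) atTop (nhds 0) := by
    have := (tendsto_pow_atTop_nhds_zero_of_lt_one (by norm_num : (0:ℝ) ≤ 1/2)
      (by norm_num : (1/2:ℝ) < 1)).const_mul (π ^ 2 / 4)
    simpa using this
  exact squeeze_zero T_nonneg T_le hup

lemma partial_sum_eq (N : ℕ) :
    ∑ n ∈ range N, (3 * (n:ℝ) + 2) * Phi n 0 = T 0 - T N := by
  induction N with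
  | zero => simp
  | succ N ih =>
    rw [Finset.sum_range_succ, ih, T_step N]
    ring

lemma poch_one (k : ℕ) : poch 1 k = (Nat.factorial k : ℝ) := by
  induction k with
  | zero => simp [poch]
  | succ k ih =>
    rw [poch, Finset.prod_range_succ, ← poch, ih, fact_cast_succ]
    ring

lemma poch_threehalf (k : ℕ) :
    poch (3/2) k = (Nat.factorial (2 * k + 1) : ℝ) / (4 ^ k * Nat.factorial k) := by
  induction k with
  | zero => simp [poch]
  | succ k ih =>
    rw [poch, Finset.prod_range_succ, ← poch, ih]
    have e2 : 2 * (k + 1) + 1 = ((2 * k + 1) + 1) + 1 := by ring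
    rw [e2, fact_cast_succ ((2 * k + 1) + 1), fact_cast_succ (2 * k + 1), fact_cast_succ k,
      pow_succ]
    have h1 := (fact_cast_pos (2 * k + 1)).ne'
    have h2 := (fact_cast_pos k).ne'
    have h3 : ((4:ℝ) ^ k) ≠ 0 := by positivity
    field_simp
    push_cast
    ring

lemma term_eq (n : ℕ) :
    (poch 1 n) ^ 3 / (poch (3/2) n) ^ 3 * (3 * (n : ℝ) + 2) / 4 ^ n
      = (3 * (n:ℝ) + 2) * Phi n 0 := by
  rw [poch_one, poch_threehalf, Phi_zero_right]
  have h1 := (fact_cast_pos (2 * n + 1)).ne'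
  have h2 := (fact_cast_pos n).ne'
  have h3 : ((4:ℝ) ^ n) ≠ 0 := by positivity
  have h16 : (16:ℝ) ^ n = 4 ^ n * 4 ^ n := by rw [← mul_pow]; norm_num
  rw [h16]
  rw [div_pow]
  field_simp

end Stmt15

theorem stmt15 :
    Tendsto (fun N => ∑ k ∈ range N,
      (poch 1 k) ^ 3 / (poch (3/2) k) ^ 3 * (3 * (k : ℝ) + 2) / 4 ^ k)
      atTop (nhds (Real.pi ^ 2 / 4)) := by
  have heq : (fun N => ∑ k ∈ range N,
      (poch 1 k) ^ 3 / (poch (3/2) k) ^ 3 * (3 * (k : ℝ) + 2) / 4 ^ k)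
      = fun N => π ^ 2 / 4 - Stmt15.T N := by
    funext N
    rw [← Stmt15.T_zero]
    rw [← Stmt15.partial_sum_eq N]
    exact Finset.sum_congr rfl fun k _ => Stmt15.term_eq k
  rw [heq]
  have := (tendsto_const_nhds (α := ℕ) (f := atTop) (x := π ^ 2 / 4)).sub Stmt15.T_tendsto_zero
  simpa using this
end
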